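/- arXiv:0705.1701 — 5 statements merged into one kernel-verified Lean document; each statement's English description precedes it below -/
import Mathlib

section
/- The number of Dyck paths of length 2n (paths from 0 to 0 with steps ±1 staying nonnegative) that have exactly k up-steps occurring at odd time instants equals the Narayana number N(n,k) = (1/n) * C(n,k) * C(n,k-1). -/
/-- Number of up-steps among the first `t` steps of the path encoded by `f`
(`f i = true` means the step at time `i+1` is an up-step). -/
def upCount (f : ℕ → Bool) (t : ℕ) : ℕ :=
  ((Finset.range t).filter (fun i => f i = true)).card

/-- The level of the path after `t` steps. -/
def pathHeight (f : ℕ → Bool) (t : ℕ) : ℤ :=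
  2 * (upCount f t : ℤ) - (t : ℤ)

/-- `f` encodes a Dyck path of length `2*n`: the path starts and ends at `0`,
stays nonnegative, and `f` is normalized to be `false` beyond the path. -/
def IsDyckPath (n : ℕ) (f : ℕ → Bool) : Prop :=
  (∀ t, 2 * n ≤ t → f t = false) ∧ pathHeight f (2 * n) = 0 ∧
    ∀ t ≤ 2 * n, 0 ≤ pathHeight f t

/-- The number of up-steps occurring at odd time instants (times `1, 3, ...`,
i.e. step indices `0, 2, ...`). -/
def oddUpCount (n : ℕ) (f : ℕ → Bool) : ℕ :=
  ((Finset.range n).filter (fun m => f (2 * m) = true)).card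

/-- The set of Dyck paths of length `2*n` with exactly `k` odd up-steps. -/
def dyckSet (n k : ℕ) : Set (ℕ → Bool) :=
  {f | IsDyckPath n f ∧ oddUpCount n f = k}

open Finset


private def Spart (v : ℕ → ℤ) (t : ℕ) : ℤ := ∑ i ∈ Finset.range t, v i

lemma window_sum (v : ℕ → ℤ) (m : ℕ) (hper : ∀ i, v (i + (m+1)) = v i)
    (hsum : Spart v (m+1) = -1) : ∀ t, (∑ i ∈ range (m+1), v (t + i)) = -1 := by
  intro t
  induction t with
  | zero => simpa [Spart] using hsum
  | succ t ih =>
      have h1 : ∑ i ∈ range (m+1), v (t + i)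
          = v t + ∑ i ∈ range m, v (t + 1 + i) := by
        rw [Finset.sum_range_succ', add_comm]
        have h0 : v (t+0) = v t := by norm_num
        have hs : (∑ i ∈ range m, v (t+(i+1))) = ∑ i ∈ range m, v (t+1+i) :=
          Finset.sum_congr rfl (fun i _ => by rw [show t+(i+1) = t+1+i from by omega])
        rw [h0, hs]
      have h2 : ∑ i ∈ range (m+1), v (t + 1 + i)
          = (∑ i ∈ range m, v (t + 1 + i)) + v t := by
        rw [Finset.sum_range_succ]
        congr 1
        have : t + 1 + m = t + (m+1) := by omega
        rw [this, hper]
      omega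

lemma Spart_shift (v : ℕ → ℤ) (m : ℕ) (hper : ∀ i, v (i + (m+1)) = v i)
    (hsum : Spart v (m+1) = -1) : ∀ t, Spart v (t + (m+1)) = Spart v t - 1 := by
  intro t
  have := Finset.sum_range_add v t (m+1)
  have hw := window_sum v m hper hsum t
  simp only [Spart] at *
  omega

lemma cycle_lemma (v : ℕ → ℤ) (m : ℕ) (hper : ∀ i, v (i + (m+1)) = v i)
    (hsum : Spart v (m+1) = -1) :
    ∃! r, r < m + 1 ∧ ∀ t < m + 1, 0 ≤ ∑ i ∈ range t, v (r + i) := by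
  set n := m + 1 with hn
  -- partial-sum form of goodness
  have hgood : ∀ r t, (∑ i ∈ range t, v (r + i)) = Spart v (r + t) - Spart v r := by
    intro r t
    have := Finset.sum_range_add v r t
    simp only [Spart] at *
    omega
  -- first argmin
  have hne : (range n).Nonempty := ⟨0, by simp [hn]⟩
  obtain ⟨r₀, hr₀mem, hr₀min⟩ := Finset.exists_min_image (range n) (Spart v) hne
  have hex : ∃ r, r ∈ range n ∧ ∀ t ∈ range n, Spart v r ≤ Spart v t :=
    ⟨r₀, hr₀mem, hr₀min⟩
  classical
  let r := Nat.find hex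
  have hrP : r ∈ range n ∧ ∀ t ∈ range n, Spart v r ≤ Spart v t := Nat.find_spec hex
  have hrn : r < n := by simpa using hrP.1
  have hrmin : ∀ t < n, Spart v r ≤ Spart v t := by
    intro t ht; exact hrP.2 t (Finset.mem_range.2 ht)
  have hrstrict : ∀ s < r, Spart v r < Spart v s := by
    intro s hs
    have hns := Nat.find_min hex hs
    push_neg at hns
    have hsn : s ∈ range n := Finset.mem_range.2 (lt_trans hs hrn)
    obtain ⟨t, htmem, hts⟩ := hns hsn
    exact lt_of_le_of_lt (hrmin t (Finset.mem_range.1 htmem)) hts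
  -- r is good
  have hgoodr : ∀ t < n, 0 ≤ ∑ i ∈ range t, v (r + i) := by
    intro t ht
    rw [hgood]
    rcases Nat.lt_or_ge (r + t) n with h | h
    · have := hrmin (r + t) h; omega
    · have hs : r + t - n < r := by omega
      have : Spart v (r + t) = Spart v (r + t - n) - 1 := by
        have := Spart_shift v m hper hsum (r + t - n)
        rw [← hn] at this
        have he : r + t - n + n = r + t := by omega
        rw [he] at this; exact this
      have := hrstrict (r + t - n) hs
      omega
  -- no two good rotations
  have hno2 : ∀ r₁ r₂, r₁ < r₂ → r₂ < n →
      (∀ t < n, 0 ≤ ∑ i ∈ range t, v (r₁ + i)) →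
      (∀ t < n, 0 ≤ ∑ i ∈ range t, v (r₂ + i)) → False := by
    intro r₁ r₂ h12 h2n hg1 hg2
    have ha := hg1 (r₂ - r₁) (by omega)
    rw [hgood] at ha
    have he1 : r₁ + (r₂ - r₁) = r₂ := by omega
    rw [he1] at ha
    have hb := hg2 (r₁ + n - r₂) (by omega)
    rw [hgood] at hb
    have he2 : r₂ + (r₁ + n - r₂) = r₁ + n := by omega
    rw [he2] at hb
    have := Spart_shift v m hper hsum r₁
    rw [← hn] at this
    omega
  refine ⟨r, ⟨hrn, hgoodr⟩, ?_⟩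
  intro y ⟨hyn, hgy⟩
  rcases lt_trichotomy y r with h | h | h
  · exact absurd (hno2 y r h hrn hgy hgoodr) (by simp)
  · exact h
  · exact absurd (hno2 r y h hyn hgoodr hgy) (by simp)


def pval (p : Bool × Bool) : ℤ :=
  (if p.1 then 1 else 0) + (if p.2 then 1 else 0) - 1

lemma pval_ge : ∀ p, -1 ≤ pval p := by decide

lemma pval_eq_neg_one {p : Bool × Bool} (h : pval p = -1) : p = (false, false) := by
  revert h; revert p; decide

variable {n : ℕ}

def vext (w : Fin n → Bool × Bool) (i : ℕ) : ℤ :=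
  if h : i % n < n then pval (w ⟨i % n, h⟩) else 0

def wpsum (w : Fin n → Bool × Bool) (t : ℕ) : ℤ := ∑ i ∈ Finset.range t, vext w i

def rotW (r : ℕ) (w : Fin n → Bool × Bool) : Fin n → Bool × Bool :=
  fun i => w ⟨(i.val + r) % n, Nat.mod_lt _ i.pos⟩

lemma vext_of_lt (w : Fin n → Bool × Bool) {i : ℕ} (h : i < n) :
    vext w i = pval (w ⟨i, h⟩) := by
  have h2 : i % n = i := Nat.mod_eq_of_lt h
  simp only [vext]
  rw [dif_pos (h2 ▸ (h2.symm ▸ h : i % n < n))]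
  congr 1
  exact congrArg w (Fin.ext h2)

lemma vext_per (w : Fin n → Bool × Bool) (i : ℕ) : vext w (i + n) = vext w i := by
  simp only [vext, Nat.add_mod_right]

lemma vext_rot (w : Fin n → Bool × Bool) (r i : ℕ) :
    vext (rotW r w) i = vext w (i + r) := by
  rcases Nat.eq_zero_or_pos n with h0 | hn
  · subst h0; simp [vext]
  have h1 : i % n < n := Nat.mod_lt _ hn
  have h2 : (i + r) % n < n := Nat.mod_lt _ hn
  simp only [vext, dif_pos h1, dif_pos h2, rotW]
  congr 1
  exact congrArg w (Fin.ext (by simp [Nat.mod_add_mod]))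

lemma mod_cancel (hn : 0 < n) (a r : ℕ) : (a + r + (n - r % n)) % n = a % n := by
  obtain ⟨Q, hQ, hQr⟩ : ∃ Q, Q = n * (r / n) ∧ Q + r % n = r :=
    ⟨_, rfl, by rw [Nat.div_add_mod]⟩
  obtain ⟨s, hs⟩ : ∃ s, s = r % n := ⟨_, rfl⟩
  have h2 : s < n := hs ▸ Nat.mod_lt _ hn
  rw [← hs]
  have h3 : a + r + (n - s) = a + Q + n := by omega
  rw [h3, Nat.add_mod_right, hQ, Nat.add_mul_mod_self_left]

lemma rotW_rotW (r s : ℕ) (w : Fin n → Bool × Bool) :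
    rotW r (rotW s w) = rotW (r + s) w := by
  funext i
  simp only [rotW]
  exact congrArg w (Fin.ext (by
    show ((i.val + r) % n + s) % n = (i.val + (r + s)) % n
    rw [Nat.mod_add_mod]
    congr 1; omega))

lemma rotW_inv (r : ℕ) (w : Fin n → Bool × Bool) :
    rotW (n - r % n) (rotW r w) = w := by
  rcases Nat.eq_zero_or_pos n with h0 | hn
  · funext i; exact absurd i.pos (by omega)
  rw [rotW_rotW]
  funext i
  simp only [rotW]
  refine congrArg w (Fin.ext ?_)
  show (i.val + (n - r % n + r)) % n = i.val
  have : i.val + (n - r % n + r) = i.val + r + (n - r % n) := by omega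
  rw [this, mod_cancel hn, Nat.mod_eq_of_lt i.isLt]

def wc1 (w : Fin n → Bool × Bool) : ℕ := (univ.filter fun m => (w m).1 = true).card
def wc2 (w : Fin n → Bool × Bool) : ℕ := (univ.filter fun m => (w m).2 = true).card

lemma wpsum_univ (w : Fin n → Bool × Bool) : wpsum w n = ∑ i : Fin n, pval (w i) := by
  have h := Fin.sum_univ_eq_sum_range (fun j => vext w j) n
  rw [wpsum, ← h]
  exact Finset.sum_congr rfl (fun i _ => by
    rw [vext_of_lt w i.isLt])

lemma wpsum_total (w : Fin n → Bool × Bool) :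
    wpsum w n = (wc1 w : ℤ) + (wc2 w : ℤ) - n := by
  rw [wpsum_univ]
  simp only [pval]
  rw [Finset.sum_sub_distrib, Finset.sum_add_distrib]
  simp only [wc1, wc2, Finset.sum_boole, Finset.sum_const, Finset.card_univ,
    Fintype.card_fin, nsmul_eq_mul, mul_one]

def rotFin (n r : ℕ) : Fin n ≃ Fin n where
  toFun m := ⟨(m.val + r) % n, Nat.mod_lt _ m.pos⟩
  invFun m := ⟨(m.val + (n - r % n)) % n, Nat.mod_lt _ m.pos⟩
  left_inv m := by
    refine Fin.ext ?_
    show ((m.val + r) % n + (n - r % n)) % n = m.val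
    rw [Nat.mod_add_mod, mod_cancel m.pos, Nat.mod_eq_of_lt m.isLt]
  right_inv m := by
    refine Fin.ext ?_
    show ((m.val + (n - r % n)) % n + r) % n = m.val
    rw [Nat.mod_add_mod, show m.val + (n - r % n) + r = m.val + r + (n - r % n) from by omega,
      mod_cancel m.pos, Nat.mod_eq_of_lt m.isLt]

lemma rotW_eq_rotFin (r : ℕ) (w : Fin n → Bool × Bool) (m : Fin n) :
    rotW r w m = w (rotFin n r m) := rfl

lemma card_filter_rot (r : ℕ) (w : Fin n → Bool × Bool) (p : Bool × Bool → Prop)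
    [DecidablePred p] :
    (univ.filter fun m => p (rotW r w m)).card = (univ.filter fun m => p (w m)).card := by
  refine Finset.card_equiv (rotFin n r) (fun m => ?_)
  rw [Finset.mem_filter, Finset.mem_filter]
  simp [rotW_eq_rotFin]

lemma wc1_rot (r : ℕ) (w : Fin n → Bool × Bool) : wc1 (rotW r w) = wc1 w :=
  card_filter_rot r w (fun p => p.1 = true)

lemma wc2_rot (r : ℕ) (w : Fin n → Bool × Bool) : wc2 (rotW r w) = wc2 w :=
  card_filter_rot r w (fun p => p.2 = true)

lemma rotW_mod (a : ℕ) (w : Fin n → Bool × Bool) : rotW a w = rotW (a % n) w := by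
  funext i
  exact congrArg w (Fin.ext (by
    show (i.val + a) % n = (i.val + a % n) % n
    conv_rhs => rw [Nat.add_mod_mod]))

lemma rotW_zero (w : Fin n → Bool × Bool) : rotW 0 w = w := by
  funext i
  exact congrArg w (Fin.ext (by
    show (i.val + 0) % n = i.val
    rw [Nat.add_zero, Nat.mod_eq_of_lt i.isLt]))

lemma wpsum_rot (w : Fin n → Bool × Bool) (r t : ℕ) :
    wpsum (rotW r w) t = ∑ i ∈ range t, vext w (r + i) := by
  refine Finset.sum_congr rfl (fun i _ => ?_)
  rw [vext_rot, Nat.add_comm]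

lemma word_cycle (hn : 0 < n) (w : Fin n → Bool × Bool) (hsum : wpsum w n = -1) :
    ∃! r, r < n ∧ ∀ t < n, 0 ≤ wpsum (rotW r w) t := by
  obtain ⟨m, rfl⟩ : ∃ m, n = m + 1 := ⟨n - 1, by omega⟩
  have h := cycle_lemma (vext w) m (vext_per w) hsum
  refine ⟨h.exists.choose, ⟨h.exists.choose_spec.1, fun t ht => ?_⟩, fun y hy => ?_⟩
  · rw [wpsum_rot]; exact h.exists.choose_spec.2 t ht
  · refine h.unique ⟨hy.1, fun t ht => ?_⟩ h.exists.choose_spec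
    rw [← wpsum_rot]; exact hy.2 t ht

def AllW (n k : ℕ) : Finset (Fin n → Bool × Bool) :=
  univ.filter fun w => wc1 w = n - k ∧ wc2 w = k - 1

def GoodW (n k : ℕ) : Finset (Fin n → Bool × Bool) :=
  univ.filter fun w => (wc1 w = n - k ∧ wc2 w = k - 1) ∧ ∀ t < n, 0 ≤ wpsum w t

lemma allW_sum {k : ℕ} (hk1 : 1 ≤ k) (hkn : k ≤ n) {w : Fin n → Bool × Bool}
    (hw : w ∈ AllW n k) : wpsum w n = -1 := by
  rw [AllW, Finset.mem_filter] at hw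
  rw [wpsum_total, hw.2.1, hw.2.2]
  push_cast [Nat.cast_sub hkn, Nat.cast_sub hk1]
  ring

lemma rot_cancel (hn : 0 < n) {r : ℕ} (hr : r < n) (w : Fin n → Bool × Bool) :
    rotW ((n - r % n) % n) (rotW r w) = w := by
  rw [rotW_rotW, rotW_mod]
  have h1 : r % n = r := Nat.mod_eq_of_lt hr
  have h2 : ((n - r % n) % n + r) % n = 0 := by
    rcases Nat.eq_zero_or_pos r with h0 | hpos
    · subst h0; simp
    · rw [h1, Nat.mod_eq_of_lt (by omega : n - r < n),
        show n - r + r = n from by omega, Nat.mod_self]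
  rw [h2, rotW_zero]

lemma card_AllW_eq {k : ℕ} (hn : 0 < n) (hk1 : 1 ≤ k) (hkn : k ≤ n) :
    (AllW n k).card = (GoodW n k).card * n := by
  classical
  have hmem : ∀ (g : Fin n → Bool × Bool) (r : ℕ), g ∈ GoodW n k → rotW r g ∈ AllW n k := by
    intro g r hg
    rw [GoodW, Finset.mem_filter] at hg
    rw [AllW, Finset.mem_filter]
    exact ⟨Finset.mem_univ _, by rw [wc1_rot, wc2_rot]; exact hg.2.1⟩
  have hgoodrot : ∀ (g : Fin n → Bool × Bool) (r : Fin n), g ∈ GoodW n k →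
      ∀ s < n, (∀ t < n, 0 ≤ wpsum (rotW s (rotW r.val g)) t) → s = (n - r.val % n) % n := by
    intro g r hg s hs hgood
    have hsum : wpsum (rotW r.val g) n = -1 := allW_sum hk1 hkn (hmem g r.val hg)
    have h := word_cycle hn (rotW r.val g) hsum
    have h1 : s = h.exists.choose := h.unique ⟨hs, hgood⟩ h.exists.choose_spec
    have h2 : (n - r.val % n) % n = h.exists.choose := by
      refine h.unique ⟨Nat.mod_lt _ hn, fun t ht => ?_⟩ h.exists.choose_spec
      rw [rot_cancel hn r.isLt g]
      rw [GoodW, Finset.mem_filter] at hg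
      exact hg.2.2 t ht
    rw [h1, h2]
  have key : (GoodW n k ×ˢ (univ : Finset (Fin n))).card = (AllW n k).card := by
    refine Finset.card_bij (fun p _ => rotW p.2.val p.1) ?_ ?_ ?_
    · rintro ⟨g, r⟩ hp
      rw [Finset.mem_product] at hp
      exact hmem g r.val hp.1
    · rintro ⟨g₁, r₁⟩ h₁ ⟨g₂, r₂⟩ h₂ heq
      rw [Finset.mem_product] at h₁ h₂
      simp only at heq
      have e₁ : (n - r₁.val % n) % n = (n - r₂.val % n) % n := by
        refine (hgoodrot g₁ r₁ h₁.1 ((n - r₂.val % n) % n) (Nat.mod_lt _ hn) ?_).symm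
        intro t ht
        rw [show rotW r₁.val g₁ = rotW r₂.val g₂ from heq, rot_cancel hn r₂.isLt g₂]
        rw [GoodW, Finset.mem_filter] at h₂
        exact h₂.1.2.2 t ht
      have hr : r₁ = r₂ := by
        have b₁ := r₁.isLt; have b₂ := r₂.isLt
        have m₁ : r₁.val % n = r₁.val := Nat.mod_eq_of_lt b₁
        have m₂ : r₂.val % n = r₂.val := Nat.mod_eq_of_lt b₂
        rw [m₁, m₂] at e₁
        refine Fin.ext ?_
        rcases Nat.eq_zero_or_pos r₁.val with h0 | hp1 <;>
          rcases Nat.eq_zero_or_pos r₂.val with h0' | hp2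
        · omega
        · rw [h0] at e₁; simp at e₁
          rw [Nat.mod_eq_of_lt (by omega : n - r₂.val < n)] at e₁
          omega
        · rw [h0'] at e₁; simp at e₁
          rw [Nat.mod_eq_of_lt (by omega : n - r₁.val < n)] at e₁
          omega
        · rw [Nat.mod_eq_of_lt (by omega : n - r₁.val < n),
            Nat.mod_eq_of_lt (by omega : n - r₂.val < n)] at e₁
          omega
      subst hr
      have : g₁ = rotW ((n - r₁.val % n) % n) (rotW r₁.val g₁) := (rot_cancel hn r₁.isLt g₁).symm
      rw [Prod.mk.injEq]
      refine ⟨?_, rfl⟩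
      rw [this, heq, rot_cancel hn r₁.isLt g₂]
    · intro w hw
      have hsum : wpsum w n = -1 := allW_sum hk1 hkn hw
      have h := word_cycle hn w hsum
      set r' := h.exists.choose with hr'
      have hspec := h.exists.choose_spec
      have hr'n : r' < n := hspec.1
      refine ⟨(rotW r' w, ⟨(n - r' % n) % n, Nat.mod_lt _ hn⟩), ?_, ?_⟩
      · rw [Finset.mem_product]
        constructor
        · rw [GoodW, Finset.mem_filter]
          refine ⟨Finset.mem_univ _, ⟨?_, hspec.2⟩⟩
          rw [wc1_rot, wc2_rot]
          rw [AllW, Finset.mem_filter] at hw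
          exact hw.2
        · exact Finset.mem_univ _
      · exact rot_cancel hn hr'n w
  rw [← key, Finset.card_product, Finset.card_univ, Fintype.card_fin]

lemma card_bool_count (n j : ℕ) :
    ((univ : Finset (Fin n → Bool)).filter
      (fun f => (univ.filter fun m => f m = true).card = j)).card = n.choose j := by
  classical
  have h : ((univ : Finset (Fin n → Bool)).filter
      (fun f => (univ.filter fun m => f m = true).card = j)).card
      = (Finset.powersetCard j (univ : Finset (Fin n))).card := by
    refine Finset.card_bij' (fun f _ => univ.filter fun m => f m = true)
      (fun s _ => fun m => decide (m ∈ s)) ?_ ?_ ?_ ?_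
    · intro f hf
      rw [Finset.mem_filter] at hf
      rw [Finset.mem_powersetCard]
      exact ⟨Finset.subset_univ _, hf.2⟩
    · intro s hs
      rw [Finset.mem_powersetCard] at hs
      rw [Finset.mem_filter]
      refine ⟨Finset.mem_univ _, ?_⟩
      show (univ.filter fun m => decide (m ∈ s) = true).card = j
      have he : (univ.filter fun m => decide (m ∈ s) = true) = s := by
        ext m; simp
      rw [he]; exact hs.2
    · intro f _
      funext m
      simp
    · intro s _
      ext m
      simp
  rw [h, Finset.card_powersetCard, Finset.card_univ, Fintype.card_fin]

lemma card_AllW_choose {n k : ℕ} : (AllW n k).card = n.choose (n - k) * n.choose (k - 1) := by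
  classical
  rw [← card_bool_count n (n - k), ← card_bool_count n (k - 1), ← Finset.card_product]
  refine Finset.card_bij' (fun w _ => ((fun m => (w m).1), (fun m => (w m).2)))
    (fun p _ => fun m => (p.1 m, p.2 m)) ?_ ?_ ?_ ?_
  · intro w hw
    rw [AllW, Finset.mem_filter] at hw
    rw [Finset.mem_product, Finset.mem_filter, Finset.mem_filter]
    exact ⟨⟨Finset.mem_univ _, hw.2.1⟩, ⟨Finset.mem_univ _, hw.2.2⟩⟩
  · intro p hp
    rw [Finset.mem_product, Finset.mem_filter, Finset.mem_filter] at hp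
    rw [AllW, Finset.mem_filter]
    exact ⟨Finset.mem_univ _, ⟨hp.1.2, hp.2.2⟩⟩
  · intro w _; rfl
  · intro p _; rfl

def toWord (n : ℕ) (f : ℕ → Bool) : Fin n → Bool × Bool :=
  fun m => (f (2*m.val+1), f (2*m.val+2))

def toPath (n : ℕ) (w : Fin n → Bool × Bool) : ℕ → Bool := fun t =>
  if t = 0 then true
  else if t % 2 = 1 then (if h : t/2 < n then (w ⟨t/2, h⟩).1 else false)
  else (if h : t/2 - 1 < n then (w ⟨t/2 - 1, h⟩).2 else false)

def bn (x : Bool) : ℕ := if x then 1 else 0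

lemma upCount_eq_sum (f : ℕ → Bool) (t : ℕ) :
    upCount f t = ∑ i ∈ range t, bn (f i) := by
  rw [upCount, Finset.card_filter]
  exact Finset.sum_congr rfl (fun i _ => by by_cases h : f i = true <;> simp [h, bn])

lemma upCount_succ (f : ℕ → Bool) (t : ℕ) :
    upCount f (t+1) = upCount f t + bn (f t) := by
  rw [upCount_eq_sum, upCount_eq_sum, Finset.sum_range_succ]

lemma pathHeight_succ (f : ℕ → Bool) (t : ℕ) :
    pathHeight f (t+1) = pathHeight f t + (2 * (bn (f t) : ℤ) - 1) := by
  simp only [pathHeight, upCount_succ]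
  push_cast
  ring

lemma pathHeight_zero (f : ℕ → Bool) : pathHeight f 0 = 0 := by
  simp [pathHeight, upCount]

lemma sum_range_split (g : ℕ → ℕ) (n : ℕ) :
    (∑ i ∈ range (2*n), g i)
      = (∑ m ∈ range n, g (2*m)) + ∑ m ∈ range n, g (2*m+1) := by
  induction n with
  | zero => simp
  | succ n ih =>
      have h : 2*(n+1) = 2*n + 1 + 1 := by ring
      rw [h, Finset.sum_range_succ, Finset.sum_range_succ,
        Finset.sum_range_succ (fun m => g (2*m)), Finset.sum_range_succ (fun m => g (2*m+1)), ih]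
      ring

lemma height_psum {n : ℕ} (f : ℕ → Bool) (hf0 : f 0 = true) :
    ∀ m < n, pathHeight f (2*m+1) = 1 + 2 * wpsum (toWord n f) m := by
  intro m
  induction m with
  | zero =>
      intro _
      show pathHeight f 1 = 1 + 2 * wpsum (toWord n f) 0
      rw [show (1:ℕ) = 0 + 1 from rfl, pathHeight_succ, pathHeight_zero, hf0]
      simp [wpsum, bn]
  | succ m ih =>
      intro hm
      have hmn : m < n := by omega
      have h1 := ih hmn
      have h2 : pathHeight f (2*(m+1)+1)
          = pathHeight f (2*m+1) + (2*(bn (f (2*m+1)) : ℤ) - 1)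
            + (2*(bn (f (2*m+2)) : ℤ) - 1) := by
        rw [show 2*(m+1)+1 = (2*m+2) + 1 from by ring, pathHeight_succ,
          show 2*m+2 = (2*m+1) + 1 from by ring, pathHeight_succ]
      have h3 : wpsum (toWord n f) (m+1) = wpsum (toWord n f) m + pval (toWord n f ⟨m, hmn⟩) := by
        rw [wpsum, wpsum, Finset.sum_range_succ, vext_of_lt _ hmn]
      have h4 : pval (toWord n f ⟨m, hmn⟩)
          = (bn (f (2*m+1)) : ℤ) + (bn (f (2*m+2)) : ℤ) - 1 := by
        simp only [pval, toWord, bn]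
        by_cases hA : f (2*m+1) = true <;> by_cases hB : f (2*m+2) = true <;>
          simp [hA, hB]
      rw [h2, h1, h3, h4]
      ring

lemma wc1_toWord (n : ℕ) (f : ℕ → Bool) :
    wc1 (toWord n f) = ∑ m ∈ range n, bn (f (2*m+1)) := by
  rw [wc1, Finset.card_filter, ← Fin.sum_univ_eq_sum_range (fun j => bn (f (2*j+1))) n]
  refine Finset.sum_congr rfl (fun i _ => ?_)
  by_cases h : f (2*i.val+1) = true <;> simp [toWord, h, bn]

lemma wc2_toWord (n : ℕ) (f : ℕ → Bool) :
    wc2 (toWord n f) = ∑ m ∈ range n, bn (f (2*m+2)) := by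
  rw [wc2, Finset.card_filter, ← Fin.sum_univ_eq_sum_range (fun j => bn (f (2*j+2))) n]
  refine Finset.sum_congr rfl (fun i _ => ?_)
  by_cases h : f (2*i.val+2) = true <;> simp [toWord, h, bn]

lemma oddUpCount_eq_sum (n : ℕ) (f : ℕ → Bool) :
    oddUpCount n f = ∑ m ∈ range n, bn (f (2*m)) := by
  rw [oddUpCount, Finset.card_filter]
  exact Finset.sum_congr rfl (fun i _ => by by_cases h : f (2*i) = true <;> simp [h, bn])

lemma count_L1 (n : ℕ) (f : ℕ → Bool) :
    upCount f (2*n) = oddUpCount n f + wc1 (toWord n f) := by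
  rw [upCount_eq_sum, sum_range_split, oddUpCount_eq_sum, wc1_toWord]

lemma count_L2 {n : ℕ} (hn : 0 < n) (f : ℕ → Bool) (hf0 : f 0 = true)
    (hf2n : f (2*n) = false) :
    oddUpCount n f = 1 + wc2 (toWord n f) := by
  obtain ⟨n', rfl⟩ : ∃ n', n = n' + 1 := ⟨n - 1, by omega⟩
  rw [oddUpCount_eq_sum, wc2_toWord, Finset.sum_range_succ',
    Finset.sum_range_succ (fun m => bn (f (2*m+2)))]
  have e1 : ∀ i, 2*(i+1) = 2*i+2 := fun i => by ring
  have e2 : bn (f (2*0)) = 1 := by rw [show 2*0 = 0 from rfl, hf0]; rfl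
  have e3 : bn (f (2*n'+2)) = 0 := by
    rw [show 2*n'+2 = 2*(n'+1) from by ring, hf2n]; rfl
  simp only [e1, e2, e3]
  omega

lemma toWord_toPath (n : ℕ) (w : Fin n → Bool × Bool) : toWord n (toPath n w) = w := by
  funext m
  have hm := m.isLt
  refine Prod.ext ?_ ?_
  · show toPath n w (2*m.val+1) = (w m).1
    have h1 : ¬ (2*m.val+1 = 0) := by omega
    have h2 : (2*m.val+1) % 2 = 1 := by omega
    have h3 : (2*m.val+1)/2 = m.val := by omega
    simp only [toPath, if_neg h1, h2, eq_self_iff_true, if_true, h3, dif_pos hm, Fin.eta]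
  · show toPath n w (2*m.val+2) = (w m).2
    have h1 : ¬ (2*m.val+2 = 0) := by omega
    have h2 : ¬ ((2*m.val+2) % 2 = 1) := by omega
    have h3 : (2*m.val+2)/2 - 1 = m.val := by omega
    simp only [toPath, if_neg h1, if_neg h2, h3, dif_pos hm]

lemma toPath_toWord {n : ℕ} (hn : 0 < n) (f : ℕ → Bool) (hf0 : f 0 = true)
    (hnorm : ∀ t, 2*n ≤ t → f t = false) : toPath n (toWord n f) = f := by
  funext t
  rcases Nat.eq_zero_or_pos t with rfl | ht
  · simp [toPath, hf0]
  by_cases hodd : t % 2 = 1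
  · by_cases hlt : t/2 < n
    · have h3 : 2*(t/2)+1 = t := by omega
      simp only [toPath, if_neg (by omega : ¬ t = 0), hodd, eq_self_iff_true, if_true,
        dif_pos hlt, toWord, h3]
    · have : 2*n ≤ t := by omega
      simp only [toPath, if_neg (by omega : ¬ t = 0), hodd, eq_self_iff_true, if_true,
        dif_neg hlt, hnorm t this]
  · by_cases hlt : t/2 - 1 < n
    · have h3 : 2*(t/2-1)+2 = t := by omega
      simp only [toPath, if_neg (by omega : ¬ t = 0), if_neg hodd, dif_pos hlt, toWord, h3]
    · have : 2*n ≤ t := by omega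
      simp only [toPath, if_neg (by omega : ¬ t = 0), if_neg hodd, dif_neg hlt, hnorm t this]

lemma dyck_f0 {n k : ℕ} (hn : 0 < n) {f : ℕ → Bool} (hf : f ∈ dyckSet n k) :
    f 0 = true := by
  obtain ⟨⟨hnorm, hend, hnonneg⟩, hodd⟩ := hf
  by_contra h0
  have h1 := hnonneg 1 (by omega)
  rw [show (1:ℕ) = 0 + 1 from rfl, pathHeight_succ, pathHeight_zero] at h1
  have : bn (f 0) = 0 := by
    simp only [Bool.not_eq_true] at h0
    simp [bn, h0]
  rw [this] at h1
  norm_num at h1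

lemma mem_GoodW_of_dyck {n k : ℕ} (hn : 0 < n) (hk1 : 1 ≤ k) {f : ℕ → Bool}
    (hf : f ∈ dyckSet n k) : toWord n f ∈ GoodW n k := by
  have hf0 := dyck_f0 hn hf
  obtain ⟨⟨hnorm, hend, hnonneg⟩, hodd⟩ := hf
  have hup : upCount f (2*n) = n := by
    rw [pathHeight] at hend
    push_cast at hend
    omega
  have hf2n : f (2*n) = false := hnorm (2*n) le_rfl
  have hL2 := count_L2 hn f hf0 hf2n
  have hL1 := count_L1 n f
  rw [GoodW, Finset.mem_filter]
  refine ⟨Finset.mem_univ _, ⟨⟨by omega, by omega⟩, fun t ht => ?_⟩⟩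
  have h := height_psum f hf0 t ht
  have h2 := hnonneg (2*t+1) (by omega)
  rw [h] at h2
  omega

lemma mem_dyck_of_GoodW {n k : ℕ} (hn : 0 < n) (hk1 : 1 ≤ k) (hkn : k ≤ n)
    {w : Fin n → Bool × Bool} (hw : w ∈ GoodW n k) : toPath n w ∈ dyckSet n k := by
  rw [GoodW, Finset.mem_filter] at hw
  obtain ⟨-, ⟨⟨hc1, hc2⟩, hgood⟩⟩ := hw
  set f := toPath n w with hfdef
  have hf0 : f 0 = true := by simp [hfdef, toPath]
  -- total sum is -1
  have hsum : wpsum w n = -1 := by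
    rw [wpsum_total, hc1, hc2]
    push_cast [Nat.cast_sub hkn, Nat.cast_sub hk1]
    ring
  -- last letter is (false, false)
  have hn1 : n - 1 < n := by omega
  have hlast : w ⟨n-1, hn1⟩ = (false, false) := by
    have h1 : wpsum w n = wpsum w (n-1) + pval (w ⟨n-1, hn1⟩) := by
      have h0 := Finset.sum_range_succ (fun i => vext w i) (n-1)
      rw [show n-1+1 = n from by omega] at h0
      rw [wpsum, wpsum, h0, vext_of_lt _ hn1]
    have h2 := hgood (n-1) hn1
    have h3 := pval_ge (w ⟨n-1, hn1⟩)
    exact pval_eq_neg_one (by omega)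
  -- normalization
  have hnorm : ∀ t, 2*n ≤ t → f t = false := by
    intro t ht
    rcases Nat.eq_zero_or_pos t with rfl | htpos
    · omega
    by_cases hodd : t % 2 = 1
    · have : ¬ (t/2 < n) := by omega
      simp only [hfdef, toPath, if_neg (by omega : ¬ t = 0), hodd, eq_self_iff_true,
        if_true, dif_neg this]
    · rcases Nat.lt_or_ge (t/2 - 1) n with hlt | hge
      · have hteq : t = 2*n := by omega
        have : t/2 - 1 = n - 1 := by omega
        simp only [hfdef, toPath, if_neg (by omega : ¬ t = 0), if_neg hodd, dif_pos hlt]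
        have he : (⟨t/2-1, hlt⟩ : Fin n) = ⟨n-1, hn1⟩ := Fin.ext this
        rw [he, hlast]
      · simp only [hfdef, toPath, if_neg (by omega : ¬ t = 0), if_neg hodd, dif_neg (by omega : ¬ (t/2-1 < n))]
  have hf2n : f (2*n) = false := hnorm (2*n) le_rfl
  -- toWord of f is w
  have hwf : toWord n f = w := toWord_toPath n w
  -- counts for f
  have hL2 : oddUpCount n f = 1 + wc2 (toWord n f) := count_L2 hn f hf0 hf2n
  have hL1 : upCount f (2*n) = oddUpCount n f + wc1 (toWord n f) := count_L1 n f
  rw [hwf] at hL1 hL2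
  have hup : upCount f (2*n) = n := by omega
  -- nonnegativity
  have hpsum := @height_psum n f hf0
  have hnonneg : ∀ t ≤ 2*n, 0 ≤ pathHeight f t := by
    intro t ht
    rcases Nat.eq_zero_or_pos t with rfl | htpos
    · rw [pathHeight_zero]
    by_cases hodd : t % 2 = 1
    · have hm : t/2 < n := by omega
      have he : 2*(t/2)+1 = t := by omega
      have := hpsum (t/2) hm
      rw [he] at this
      rw [this]
      have h2 := hgood (t/2) hm
      rw [← hwf] at h2
      omega
    · have hm : (t-1)/2 < n := by omega
      have he : 2*((t-1)/2)+1 = t - 1 := by omega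
      have h1 := hpsum ((t-1)/2) hm
      rw [he] at h1
      have h2 := hgood ((t-1)/2) hm
      rw [← hwf] at h2
      have h3 : pathHeight f t = pathHeight f (t-1) + (2 * (bn (f (t-1)) : ℤ) - 1) := by
        rw [show t = (t-1)+1 from by omega] 
        rw [pathHeight_succ]
        congr 2 <;> omega
      have h4 : (0:ℤ) ≤ bn (f (t-1)) := by positivity
      omega
  -- end at zero
  have hend : pathHeight f (2*n) = 0 := by
    rw [pathHeight, hup]
    push_cast
    ring
  exact ⟨⟨hnorm, hend, hnonneg⟩, by omega⟩

/-- The number of Dyck paths of length `2n` with exactly `k` up-steps at odd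
instants equals the Narayana number `N(n,k) = (1/n) C(n,k) C(n,k-1)`. -/
theorem dyck_count_eq_narayana (n k : ℕ) (hn : 1 ≤ n) (hk1 : 1 ≤ k) (hkn : k ≤ n) :
    ((dyckSet n k).ncard : ℚ)
      = (1 / (n : ℚ)) * (n.choose k : ℚ) * (n.choose (k - 1) : ℚ) := by
  have hn0 : 0 < n := hn
  -- the image of dyckSet under toWord is GoodW
  have himg : (toWord n) '' (dyckSet n k) = ↑(GoodW n k) := by
    ext w
    constructor
    · rintro ⟨f, hf, rfl⟩
      exact mem_GoodW_of_dyck hn0 hk1 hf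
    · intro hw
      refine ⟨toPath n w, mem_dyck_of_GoodW hn0 hk1 hkn hw, toWord_toPath n w⟩
  have hinj : Set.InjOn (toWord n) (dyckSet n k) := by
    intro f₁ h₁ f₂ h₂ heq
    have e₁ : toPath n (toWord n f₁) = f₁ :=
      toPath_toWord hn0 f₁ (dyck_f0 hn0 h₁) h₁.1.1
    have e₂ : toPath n (toWord n f₂) = f₂ :=
      toPath_toWord hn0 f₂ (dyck_f0 hn0 h₂) h₂.1.1
    rw [← e₁, ← e₂, heq]
  have hcard : (dyckSet n k).ncard = (GoodW n k).card := by
    rw [← Set.ncard_coe_finset, ← himg, Set.ncard_image_of_injOn hinj]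
  have hmain : (GoodW n k).card * n = n.choose k * n.choose (k-1) := by
    rw [← card_AllW_eq hn0 hk1 hkn, card_AllW_choose, Nat.choose_symm hkn]
  have hq : ((GoodW n k).card : ℚ) * (n : ℚ) = (n.choose k : ℚ) * (n.choose (k-1) : ℚ) := by
    exact_mod_cast congrArg (Nat.cast : ℕ → ℚ) hmain
  rw [hcard]
  have hnq : (n : ℚ) ≠ 0 := by positivity
  field_simp
  linarith
end

section
/- For each integer L ≥ 1 and γ ≥ 1, the L-th moment of the Marchenko–Pastur distribution with ratio γ and variance σ² = 1 equals the sum over k from 1 to L of γ^k times the Narayana number N(L,k). That is, ∫ x^L dρ_MP(x) = Σ_{k=1}^{L} γ^k (1/L) C(L,k) C(L,k-1). -/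
open intervalIntegral

section MPaux

open Real Finset

noncomputable def Ssin (j : ℕ) : ℝ := ∫ θ in (-(π/2))..(π/2), Real.sin θ ^ j

lemma sum_range_even_odd {M : Type*} [AddCommMonoid M] (f : ℕ → M) (N : ℕ) :
    ∑ j ∈ range (2*N), f j = ∑ m ∈ range N, f (2*m) + ∑ m ∈ range N, f (2*m+1) := by
  induction N with
  | zero => simp
  | succ N ih =>
    rw [show 2*(N+1) = 2*N+1+1 by ring, Finset.sum_range_succ, Finset.sum_range_succ, ih,
      Finset.sum_range_succ, Finset.sum_range_succ]
    abel

lemma triangle_swap {M : Type*} [AddCommMonoid M] (N : ℕ) (G : ℕ → ℕ → M) :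
    ∑ m ∈ range N, ∑ i ∈ range (N - m), G m i
      = ∑ p ∈ range N, ∑ m ∈ range (p+1), G m (p-m) := by
  rw [Finset.sum_sigma', Finset.sum_sigma']
  refine Finset.sum_bij' (i := fun x _ => (⟨x.1 + x.2, x.1⟩ : Σ _ : ℕ, ℕ))
    (j := fun x _ => (⟨x.2, x.1 - x.2⟩ : Σ _ : ℕ, ℕ)) ?_ ?_ ?_ ?_ ?_
  · rintro ⟨m,i⟩ ha
    simp only [Finset.mem_sigma, Finset.mem_range] at ha ⊢
    omega
  · rintro ⟨p,m⟩ ha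
    simp only [Finset.mem_sigma, Finset.mem_range] at ha ⊢
    omega
  · rintro ⟨m,i⟩ ha
    simp only [Finset.mem_sigma, Finset.mem_range] at ha
    show (⟨m, m + i - m⟩ : Σ _ : ℕ, ℕ) = ⟨m, i⟩
    simp only [Sigma.mk.inj_iff, heq_eq_eq, true_and]
    omega
  · rintro ⟨p,m⟩ ha
    simp only [Finset.mem_sigma, Finset.mem_range] at ha
    show (⟨m + (p - m), m⟩ : Σ _ : ℕ, ℕ) = ⟨p, m⟩
    simp only [Sigma.mk.inj_iff, heq_eq_eq, and_true]
    omega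
  · rintro ⟨m,i⟩ ha
    simp only [Finset.mem_sigma, Finset.mem_range] at ha
    show G m i = G m (m + i - m)
    congr 1
    omega

lemma term_id (n j m : ℕ) (hmj : m ≤ j) (hjn : j ≤ n) :
    (n.choose (2*m) : ℝ) * ((2*m).choose m) / (m+1) * ((n-2*m).choose (j-m))
      = (n.choose j : ℝ) * (j.choose m) * ((n-j+1).choose (m+1)) / (n-j+1) := by
  have f9 : ((n:ℝ)-(j:ℝ)+1) ≠ 0 := by
    have : (j:ℝ) ≤ n := by exact_mod_cast hjn
    nlinarith
  by_cases hm : m ≤ n - j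
  · have h2m : 2*m ≤ n := by omega
    have hjm : j - m ≤ n - 2*m := by omega
    have e1 : n - 2*m - (j - m) = n - j - m := by omega
    have e2 : n - j + 1 - (m + 1) = n - j - m := by omega
    rw [Nat.cast_choose ℝ h2m, Nat.cast_choose ℝ (show m ≤ 2*m by omega),
        Nat.cast_choose ℝ hjm, Nat.cast_choose ℝ hjn, Nat.cast_choose ℝ hmj,
        Nat.cast_choose ℝ (show m+1 ≤ n-j+1 by omega), e1, e2]
    have e3 : 2*m - m = m := by omega
    rw [e3]
    have e4 : (n-j+1).factorial = (n-j+1) * (n-j).factorial := Nat.factorial_succ _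
    have e5 : (m+1).factorial = (m+1) * m.factorial := Nat.factorial_succ _
    rw [e4, e5]
    have e6 : ((n-j+1 : ℕ) : ℝ) = (n:ℝ) - j + 1 := by
      push_cast [Nat.cast_sub hjn]; ring
    have f0 : (n.factorial : ℝ) ≠ 0 := by positivity
    have f1 : ((2*m).factorial : ℝ) ≠ 0 := by positivity
    have f2 : ((n-2*m).factorial : ℝ) ≠ 0 := by positivity
    have f3 : (m.factorial : ℝ) ≠ 0 := by positivity
    have f4 : ((j-m).factorial : ℝ) ≠ 0 := by positivity
    have f5 : ((n-j-m).factorial : ℝ) ≠ 0 := by positivity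
    have f6 : (j.factorial : ℝ) ≠ 0 := by positivity
    have f7 : ((n-j).factorial : ℝ) ≠ 0 := by positivity
    have f8 : ((m:ℝ)+1) ≠ 0 := by positivity
    push_cast [e6]
    field_simp
  · have z1 : (n.choose (2*m) : ℝ) * ((n-2*m).choose (j-m)) = 0 := by
      by_cases h2m : 2*m ≤ n
      · have : n - 2*m < j - m := by omega
        rw [Nat.choose_eq_zero_of_lt this]; simp
      · rw [Nat.choose_eq_zero_of_lt (by omega)]; simp
    have z2 : ((n-j+1).choose (m+1) : ℝ) = 0 := by
      rw [Nat.choose_eq_zero_of_lt (by omega)]; simp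
    rw [z2]
    rcases mul_eq_zero.mp z1 with h | h <;> rw [h] <;> field_simp <;> simp

lemma vdm (j q : ℕ) :
    ∑ m ∈ range (j+1), (j.choose m) * ((q+1).choose (m+1)) = (j+q+1).choose q := by
  have hA : ∑ m ∈ range (j+1), (j.choose m) * ((q+1).choose (m+1))
      = ∑ m ∈ range (j+q+1), (j.choose m) * ((q+1).choose (m+1)) := by
    apply Finset.sum_subset
    · apply Finset.range_subset_range.mpr; omega
    · intro m _ hm
      simp only [Finset.mem_range, not_lt] at hm
      rw [Nat.choose_eq_zero_of_lt (by omega)]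
      simp
  have hB : ∑ m ∈ range (q+1), (j.choose m) * ((q+1).choose (m+1))
      = ∑ m ∈ range (j+q+1), (j.choose m) * ((q+1).choose (m+1)) := by
    apply Finset.sum_subset
    · apply Finset.range_subset_range.mpr; omega
    · intro m _ hm
      simp only [Finset.mem_range, not_lt] at hm
      rw [Nat.choose_eq_zero_of_lt (show q+1 < m+1 by omega), mul_zero]
  rw [hA, ← hB]
  have hsymm : ∀ m ∈ range (q+1), (j.choose m) * ((q+1).choose (m+1))
      = (j.choose m) * ((q+1).choose (q-m)) := by
    intro m hm
    simp only [Finset.mem_range] at hm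
    congr 1
    rw [← Nat.choose_symm (show m+1 ≤ q+1 by omega)]
    congr 1
    omega
  rw [Finset.sum_congr rfl hsymm]
  have := Nat.add_choose_eq j (q+1) q
  rw [Finset.Nat.sum_antidiagonal_eq_sum_range_succ_mk] at this
  rw [← this]
  congr 1

lemma star (n j : ℕ) (hjn : j ≤ n) :
    ∑ m ∈ range (j+1),
        (n.choose (2*m) : ℝ) * ((2*m).choose m) / (m+1) * ((n-2*m).choose (j-m))
      = (n.choose j : ℝ) * ((n+1).choose (j+1)) / ((n:ℝ)-j+1) := by
  rw [Finset.sum_congr rfl (fun m hm => term_id n j m (by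
      simpa using Nat.lt_succ_iff.mp (Finset.mem_range.mp hm)) hjn)]
  rw [← Finset.sum_div]
  congr 1
  have hfac : ∀ m ∈ range (j+1), (n.choose j : ℝ) * (j.choose m) * ((n-j+1).choose (m+1))
      = (n.choose j : ℝ) * ((j.choose m) * ((n-j+1).choose (m+1))) := by
    intro m _; ring
  rw [Finset.sum_congr rfl hfac, ← Finset.mul_sum]
  congr 1
  have hv := vdm j (n-j)
  rw [show j + (n-j) + 1 = n+1 by omega] at hv
  have hs : (n+1).choose (n-j) = (n+1).choose (j+1) := by
    rw [← Nat.choose_symm (show j+1 ≤ n+1 by omega)]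
    congr 1
    omega
  rw [hs] at hv
  exact_mod_cast congrArg (Nat.cast : ℕ → ℝ) hv

lemma Ssin_rec (n : ℕ) : Ssin (n+2) = (n+1)/(n+2) * Ssin n := by
  unfold Ssin
  rw [integral_sin_pow n]
  simp [Real.cos_pi_div_two]

lemma Ssin_even (m : ℕ) : Ssin (2*m) = π * ((2*m).choose m) / 4^m := by
  induction m with
  | zero => simp [Ssin]
  | succ m ih =>
    have h : 2*(m+1) = 2*m + 2 := by ring
    rw [h, Ssin_rec, ih]
    have key : (m+1) * ((2*(m+1)).choose (m+1)) = 2 * (2*m+1) * ((2*m).choose m) := by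
      have := Nat.succ_mul_centralBinom_succ m
      simpa [Nat.centralBinom, mul_comm, mul_assoc, mul_left_comm, Nat.mul_succ] using this
    have key' : ((m:ℝ)+1) * ((2*(m+1)).choose (m+1) : ℝ) = 2 * (2*m+1) * ((2*m).choose m : ℝ) := by
      exact_mod_cast congrArg (Nat.cast : ℕ → ℝ) key
    have hm1 : ((m:ℝ)+1) ≠ 0 := by positivity
    have h4 : (4:ℝ)^m ≠ 0 := by positivity
    rw [h] at key'
    field_simp
    push_cast
    linear_combination (-2*4^m) * key'


lemma Ssin_odd (m : ℕ) : Ssin (2*m+1) = 0 := by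
  induction m with
  | zero =>
    simp only [Ssin]
    norm_num
  | succ m ih =>
    have h : 2*(m+1)+1 = (2*m+1) + 2 := by ring
    rw [h, Ssin_rec, ih, mul_zero]

lemma W_eq (j : ℕ) :
    (∫ θ in (-(π/2))..(π/2), Real.sin θ ^ j * Real.cos θ ^ 2) = Ssin j / (j+2) := by
  have h1 : (∫ θ in (-(π/2))..(π/2), Real.sin θ ^ j * Real.cos θ ^ 2)
      = ∫ θ in (-(π/2))..(π/2), (Real.sin θ ^ j - Real.sin θ ^ (j+2)) := by
    apply integral_congr
    intro θ _
    simp only []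
    have : Real.cos θ ^ 2 = 1 - Real.sin θ ^ 2 := Real.cos_sq' θ
    rw [this]
    ring
  rw [h1, integral_sub]
  · have h2 : (∫ θ in (-(π/2))..(π/2), Real.sin θ ^ (j+2)) = Ssin (j+2) := rfl
    have h3 : (∫ θ in (-(π/2))..(π/2), Real.sin θ ^ j) = Ssin j := rfl
    rw [h2, h3, Ssin_rec]
    have : ((j:ℝ)+2) ≠ 0 := by positivity
    field_simp
    ring
  · exact (Continuous.intervalIntegrable (by fun_prop) _ _)
  · exact (Continuous.intervalIntegrable (by fun_prop) _ _)

lemma V_eq (j : ℕ) :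
    (∫ t in (-1:ℝ)..1, t ^ j * Real.sqrt (1 - t^2)) = Ssin j / (j+2) := by
  rw [← W_eq]
  have hsub := intervalIntegral.integral_comp_smul_deriv
    (a := -(π/2)) (b := (π/2)) (f := Real.sin) (f' := Real.cos)
    (g := fun t => t ^ j * Real.sqrt (1 - t^2))
    (fun x _ => Real.hasDerivAt_sin x) Real.continuous_cos.continuousOn
    (by fun_prop)
  rw [Real.sin_pi_div_two, Real.sin_neg, Real.sin_pi_div_two] at hsub
  rw [← hsub]
  apply integral_congr
  intro θ hθ
  have hθ' : θ ∈ Set.Icc (-(π/2)) (π/2) := by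
    rwa [Set.uIcc_of_le (by linarith [Real.pi_pos] : -(π/2) ≤ π/2)] at hθ
  have hcos : 0 ≤ Real.cos θ := Real.cos_nonneg_of_mem_Icc hθ'
  simp only [smul_eq_mul, Function.comp]
  have : 1 - Real.sin θ ^ 2 = Real.cos θ ^ 2 := by
    have := Real.sin_sq_add_cos_sq θ; linarith
  rw [this, Real.sqrt_sq hcos]
  ring

lemma narayana_eq (L k : ℕ) (hL : 1 ≤ L) (hk1 : 1 ≤ k) (hkL : k ≤ L) :
    (1 / (L : ℝ)) * (L.choose k : ℝ) * (L.choose (k-1) : ℝ)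
      = ∑ m ∈ range k, ((L-1).choose (2*m) : ℝ) * ((2*m).choose m) / (m+1)
          * ((L-1-2*m).choose (k-1-m)) := by
  obtain ⟨n, rfl⟩ : ∃ n, L = n + 1 := ⟨L-1, by omega⟩
  obtain ⟨j, rfl⟩ : ∃ j, k = j + 1 := ⟨k-1, by omega⟩
  have hjn : j ≤ n := by omega
  simp only [Nat.add_sub_cancel]
  rw [star n j hjn]
  have h1 := Nat.choose_mul_succ_eq n j
  have h1' : (n.choose j : ℝ) * (n+1) = ((n+1).choose j : ℝ) * ((n+1-j : ℕ) : ℝ) := by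
    exact_mod_cast congrArg (Nat.cast : ℕ → ℝ) h1
  have e1 : ((n+1-j : ℕ) : ℝ) = (n : ℝ) - j + 1 := by
    rw [show n+1-j = n-j+1 by omega]
    push_cast [Nat.cast_sub hjn]; ring
  rw [e1] at h1'
  have d1 : ((n:ℝ) - j + 1) ≠ 0 := by
    have : (j:ℝ) ≤ n := by exact_mod_cast hjn
    nlinarith
  have d2 : ((n:ℝ) + 1) ≠ 0 := by positivity
  field_simp
  push_cast
  linear_combination (-(((n+1).choose (j+1)):ℝ)) * h1'

lemma final_sum (γ s : ℝ) (hs2 : s^2 = γ) (n : ℕ) :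
    (2*π)⁻¹ * ((2*s) * ∑ j ∈ range (n+1),
        (2*s) * ((2*s)^j * (1+s^2)^(n-j) * ((n.choose j):ℝ) * (Ssin j / ((j:ℝ)+2))))
      = ∑ k ∈ Finset.Icc 1 (n+1),
          γ^k * ((1/((n:ℝ)+1)) * (((n+1).choose k):ℝ) * (((n+1).choose (k-1)):ℝ)) := by
  subst hs2
  have hπ := Real.pi_pos
  -- collapse constants into the sum
  rw [Finset.mul_sum, Finset.mul_sum]
  -- define the term function
  set D : ℕ → ℝ := fun j => (2*π)⁻¹ * ((2*s) * ((2*s) * ((2*s)^j * (1+s^2)^(n-j)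
      * ((n.choose j):ℝ) * (Ssin j / ((j:ℝ)+2))))) with hD
  show ∑ j ∈ range (n+1), D j = _
  -- extend the range to 2*(n+1)
  have hext : ∑ j ∈ range (n+1), D j = ∑ j ∈ range (2*(n+1)), D j := by
    apply Finset.sum_subset
    · apply Finset.range_subset_range.mpr; omega
    · intro j _ hj
      simp only [Finset.mem_range, not_lt] at hj
      have : n.choose j = 0 := Nat.choose_eq_zero_of_lt (by omega)
      simp [hD, this]
  rw [hext, sum_range_even_odd D (n+1)]
  have hodd : ∑ m ∈ range (n+1), D (2*m+1) = 0 := by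
    apply Finset.sum_eq_zero
    intro m _
    simp [hD, Ssin_odd]
  rw [hodd, add_zero]
  -- even terms
  have heven : ∀ m ∈ range (n+1), D (2*m)
      = ∑ i ∈ range (n+1-m), (s^2)^(m+1+i)
          * ((n.choose (2*m) : ℝ) * ((2*m).choose m) / (m+1)) * ((n-2*m).choose i) := by
    intro m hmm
    simp only [Finset.mem_range] at hmm
    have hbin : (1+s^2)^(n-2*m) = ∑ i ∈ range (n-2*m+1),
        (s^2)^i * ((n-2*m).choose i : ℝ) := by
      rw [show (1+s^2) = (s^2+1) by ring, add_pow]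
      exact Finset.sum_congr rfl (fun i _ => by rw [one_pow, mul_one])
    have hbin' : (1+s^2)^(n-2*m) = ∑ i ∈ range (n+1-m),
        (s^2)^i * ((n-2*m).choose i : ℝ) := by
      rw [hbin]
      apply Finset.sum_subset
      · exact Finset.range_subset_range.mpr (by omega)
      · intro i _ hi
        simp only [Finset.mem_range, not_lt] at hi
        rw [Nat.choose_eq_zero_of_lt (by omega)]
        simp
    have h4 : (4:ℝ)^m ≠ 0 := by positivity
    have hm2 : ((2*m : ℕ):ℝ) + 2 ≠ 0 := by positivity
    calc D (2*m) = (2*π)⁻¹ * ((2*s) * ((2*s) * ((2*s)^(2*m) * (1+s^2)^(n-2*m)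
          * ((n.choose (2*m)):ℝ) * (Ssin (2*m) / (((2*m : ℕ):ℝ)+2))))) := rfl
      _ = (s^2)^(m+1) * ((n.choose (2*m) : ℝ) * ((2*m).choose m) / (m+1)) * (1+s^2)^(n-2*m) := by
          rw [Ssin_even, show (2*s)^(2*m) = 4^m * (s^2)^m by
            rw [show (2*s)^(2*m) = ((2*s)^2)^m by rw [← pow_mul], mul_pow]; ring_nf]
          have : ((2*m : ℕ):ℝ) = 2*(m:ℝ) := by push_cast; ring
          rw [this]
          have hm1 : ((m:ℝ)+1) ≠ 0 := by positivity
          field_simp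
          ring
      _ = ∑ i ∈ range (n+1-m), (s^2)^(m+1+i)
          * ((n.choose (2*m) : ℝ) * ((2*m).choose m) / (m+1)) * ((n-2*m).choose i) := by
          rw [hbin', Finset.mul_sum]
          exact Finset.sum_congr rfl (fun i _ => by rw [pow_add]; ring)
  rw [Finset.sum_congr rfl heven, triangle_swap (n+1)
    (fun m i => (s^2)^(m+1+i) * ((n.choose (2*m) : ℝ) * ((2*m).choose m) / (m+1))
      * ((n-2*m).choose i))]
  -- now rewrite the RHS as a sum over range (n+1)
  have hIcc : ∑ k ∈ Finset.Icc 1 (n+1),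
        (s^2)^k * ((1/((n:ℝ)+1)) * (((n+1).choose k):ℝ) * (((n+1).choose (k-1)):ℝ))
      = ∑ p ∈ range (n+1),
        (s^2)^(p+1) * ((1/((n:ℝ)+1)) * (((n+1).choose (p+1)):ℝ) * (((n+1).choose p):ℝ)) := by
    refine Finset.sum_bij' (i := fun k _ => k - 1) (j := fun p _ => p + 1) ?_ ?_ ?_ ?_ ?_
    · intro k hk; simp only [Finset.mem_Icc] at hk; simp only [Finset.mem_range]; omega
    · intro p hp; simp only [Finset.mem_range] at hp; simp only [Finset.mem_Icc]; omega
    · intro k hk; simp only [Finset.mem_Icc] at hk; show k - 1 + 1 = k; omega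
    · intro p hp; show p + 1 - 1 = p; omega
    · intro k hk
      simp only [Finset.mem_Icc] at hk
      show (s^2)^k * ((1/((n:ℝ)+1)) * (((n+1).choose k):ℝ) * (((n+1).choose (k-1)):ℝ))
          = (s^2)^(k-1+1) * ((1/((n:ℝ)+1)) * (((n+1).choose (k-1+1)):ℝ) * (((n+1).choose (k-1)):ℝ))
      rw [show k - 1 + 1 = k by omega]
  rw [hIcc]
  apply Finset.sum_congr rfl
  intro p hp
  simp only [Finset.mem_range] at hp
  have hpn : p ≤ n := by omega
  -- inner sum: pull out the power of s and apply star
  have hinner : ∀ m ∈ range (p+1),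
      (s^2)^(m+1+(p-m)) * ((n.choose (2*m) : ℝ) * ((2*m).choose m) / (m+1))
          * ((n-2*m).choose (p-m))
        = (s^2)^(p+1) * ((n.choose (2*m) : ℝ) * ((2*m).choose m) / (m+1)
          * ((n-2*m).choose (p-m))) := by
    intro m hm
    simp only [Finset.mem_range] at hm
    rw [show m+1+(p-m) = p+1 by omega]
    ring
  rw [Finset.sum_congr rfl hinner, ← Finset.mul_sum, star n p hpn]
  have h1 := Nat.choose_mul_succ_eq n p
  have h1' : (n.choose p : ℝ) * (n+1) = ((n+1).choose p : ℝ) * ((n+1-p : ℕ) : ℝ) := by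
    exact_mod_cast congrArg (Nat.cast : ℕ → ℝ) h1
  have e1 : ((n+1-p : ℕ) : ℝ) = (n : ℝ) - p + 1 := by
    rw [show n+1-p = n-p+1 by omega]
    push_cast [Nat.cast_sub hpn]; ring
  rw [e1] at h1'
  have d1 : ((n:ℝ) - p + 1) ≠ 0 := by
    have : (p:ℝ) ≤ n := by exact_mod_cast hpn
    nlinarith
  have d2 : ((n:ℝ) + 1) ≠ 0 := by positivity
  field_simp
  linear_combination ((s^2)^(p+1) * (((n+1).choose (p+1)):ℝ)) * h1'


end MPaux

/-- For `L ≥ 1` and `γ ≥ 1`, the `L`-th moment of the Marchenko–Pastur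
distribution with ratio `γ` and `σ² = 1` equals
`Σ_{k=1}^L γ^k N(L,k)` where `N(L,k)` are the Narayana numbers. -/
theorem mp_moment_eq_narayana_sum (γ : ℝ) (hγ : 1 ≤ γ) (L : ℕ) (hL : 1 ≤ L) :
    (∫ x in ((1 - Real.sqrt γ) ^ 2)..((1 + Real.sqrt γ) ^ 2),
        x ^ L *
          (Real.sqrt (((1 + Real.sqrt γ) ^ 2 - x) * (x - (1 - Real.sqrt γ) ^ 2)) /
            (2 * Real.pi * x)))
      = ∑ k ∈ Finset.Icc 1 L,
          γ ^ k * ((1 / (L : ℝ)) * (L.choose k : ℝ) * (L.choose (k - 1) : ℝ)) := by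
  have hπ := Real.pi_pos
  have hπ0 := Real.pi_ne_zero
  have hγ0 : (0:ℝ) ≤ γ := by linarith
  have hs2 : Real.sqrt γ ^ 2 = γ := Real.sq_sqrt hγ0
  set s := Real.sqrt γ with hsdef
  have hs0 : 0 ≤ s := Real.sqrt_nonneg γ
  have hs1 : (1:ℝ) ≤ s := by nlinarith
  obtain ⟨n, rfl⟩ : ∃ n, L = n + 1 := ⟨L - 1, by omega⟩
  have step1 : (∫ x in ((1 - s)^2)..((1 + s)^2),
        x ^ (n+1) * (Real.sqrt (((1 + s)^2 - x) * (x - (1 - s)^2)) / (2 * Real.pi * x)))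
      = (2*Real.pi)⁻¹ * ∫ x in ((1 - s)^2)..((1 + s)^2),
          x ^ n * Real.sqrt (((1 + s)^2 - x) * (x - (1 - s)^2)) := by
    rw [← intervalIntegral.integral_const_mul]
    apply intervalIntegral.integral_congr
    intro x hx
    simp only []
    by_cases hx0 : x = 0
    · subst hx0
      have h0 : ((1:ℝ) - s)^2 = 0 := by
        rw [Set.uIcc_of_le (by nlinarith)] at hx
        have h1 := hx.1
        nlinarith [sq_nonneg ((1:ℝ) - s)]
      rw [h0]
      simp
    · rw [pow_succ]
      field_simp
  rw [step1]
  have hf := intervalIntegral.smul_integral_comp_mul_add (a := (-1:ℝ)) (b := (1:ℝ))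
    (f := fun x => x^n * Real.sqrt (((1+s)^2 - x)*(x - (1-s)^2))) (c := 2*s) (d := 1+s^2)
  rw [show 2*s*(-1)+(1+s^2) = (1-s)^2 by ring, show 2*s*1+(1+s^2) = (1+s)^2 by ring] at hf
  rw [← hf]
  have step3 : (∫ t in (-1:ℝ)..1,
        (fun x => x^n * Real.sqrt (((1+s)^2 - x)*(x - (1-s)^2))) (2*s*t + (1+s^2)))
      = ∑ j ∈ Finset.range (n+1),
          (2*s) * ((2*s)^j * (1+s^2)^(n-j) * ((n.choose j) : ℝ) * (Ssin j/((j:ℝ)+2))) := by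
    have hptwise : ∀ t : ℝ, (2*s*t + (1+s^2))^n
          * Real.sqrt (((1+s)^2 - (2*s*t+(1+s^2)))*((2*s*t+(1+s^2)) - (1-s)^2))
        = ∑ j ∈ Finset.range (n+1),
            ((2*s)^j * (1+s^2)^(n-j) * ((n.choose j):ℝ)) * ((2*s) * (t^j * Real.sqrt (1-t^2))) := by
      intro t
      have hq : ((1+s)^2 - (2*s*t+(1+s^2)))*((2*s*t+(1+s^2)) - (1-s)^2)
          = (2*s)^2 * (1-t^2) := by ring
      have hsq : Real.sqrt ((2*s)^2 * (1-t^2)) = (2*s) * Real.sqrt (1-t^2) := by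
        rw [Real.sqrt_mul (sq_nonneg (2*s)), Real.sqrt_sq (by linarith)]
      rw [hq, hsq, add_pow]
      rw [Finset.sum_mul]
      apply Finset.sum_congr rfl
      intro j _
      rw [mul_pow]
      ring
    rw [intervalIntegral.integral_congr (fun t _ => hptwise t)]
    rw [intervalIntegral.integral_finset_sum]
    · apply Finset.sum_congr rfl
      intro j _
      rw [intervalIntegral.integral_const_mul, intervalIntegral.integral_const_mul, V_eq]
      ring
    · intro j _
      apply Continuous.intervalIntegrable
      have : Continuous fun t : ℝ => Real.sqrt (1 - t^2) :=
        Real.continuous_sqrt.comp (by fun_prop)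
      fun_prop
  rw [step3, smul_eq_mul]
  have := final_sum γ s hs2 n
  rw [this]
  apply Finset.sum_congr rfl
  intro k _
  push_cast
  ring
end

section
/- The Narayana number satisfies the decomposition N(s,k) = Σ_{l=0}^{min(k, s-k)} Σ_{Q=0}^{l} D(l,Q) · C(l - Q + s - k - 1, s - k - l) · C(s, k - l), where D(l,Q) is the number of Dyck paths of length 2l with exactly Q returns to level 0. -/
/-- The set of Dyck paths of length `2*l` with exactly `Q` returns to level 0
(times `t > 0` with `x(t) = 0`). -/
def dyckReturnSet (l Q : ℕ) : Set (ℕ → Bool) :=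
  {f | IsDyckPath l f ∧
    ((Finset.Icc 1 (2 * l)).filter (fun t => pathHeight f t = 0)).card = Q}

namespace NA

def cns (b : Bool) (f : ℕ → Bool) : ℕ → Bool := fun t => match t with
  | 0 => b
  | t + 1 => f t

def shft (f : ℕ → Bool) : ℕ → Bool := fun t => f (t + 1)

lemma cns_shft (g : ℕ → Bool) : cns (g 0) (shft g) = g := by
  funext t; cases t <;> rfl

lemma cns_injective (b : Bool) : Function.Injective (cns b) := by
  intro f f' h
  funext t
  exact congrFun h (t + 1)

lemma upCount_zero (f : ℕ → Bool) : upCount f 0 = 0 := by simp [upCount]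

lemma upCount_succ (f : ℕ → Bool) (t : ℕ) :
    upCount f (t + 1) = upCount f t + (if f t = true then 1 else 0) := by
  unfold upCount
  by_cases h : f t = true
  · rw [Finset.range_add_one, Finset.filter_insert, if_pos h,
      Finset.card_insert_of_notMem (by simp), if_pos h]
  · rw [Finset.range_add_one, Finset.filter_insert, if_neg h, if_neg h, add_zero]

lemma upCount_cns (b : Bool) (f : ℕ → Bool) (t : ℕ) :
    upCount (cns b f) (t + 1) = (if b = true then 1 else 0) + upCount f t := by
  induction t with
  | zero => simp [upCount_succ, upCount_zero, cns]; by_cases hb : b = true <;> simp [hb]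
  | succ t ih =>
      rw [upCount_succ, ih, upCount_succ]
      simp only [cns]
      by_cases hb : b = true <;> by_cases hf : f t = true <;> simp [hb, hf] <;> omega

lemma pathHeight_zero (f : ℕ → Bool) : pathHeight f 0 = 0 := by
  simp [pathHeight, upCount_zero]

lemma pathHeight_cns (b : Bool) (f : ℕ → Bool) (t : ℕ) :
    pathHeight (cns b f) (t + 1) = pathHeight f t + (if b = true then 1 else -1) := by
  unfold pathHeight
  rw [upCount_cns]
  push_cast
  split <;> ring

def hgt (h : ℕ) (f : ℕ → Bool) (t : ℕ) : ℤ := (h : ℤ) + pathHeight f t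

lemma hgt_zero (h : ℕ) (f : ℕ → Bool) : hgt h f 0 = h := by
  simp [hgt, pathHeight_zero]

lemma hgt_cns (b : Bool) (h h' : ℕ) (f : ℕ → Bool) (t : ℕ)
    (hh : (h' : ℤ) = (h : ℤ) + (if b = true then 1 else -1)) :
    hgt h (cns b f) (t + 1) = hgt h' f t := by
  unfold hgt
  rw [pathHeight_cns, hh]
  ring

def PS (n h Q : ℕ) : Set (ℕ → Bool) :=
  {f | (∀ t, n ≤ t → f t = false) ∧ hgt h f n = 0 ∧ (∀ t ≤ n, 0 ≤ hgt h f t) ∧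
    ((Finset.Icc 1 n).filter (fun t => hgt h f t = 0)).card = Q}

lemma dyckReturnSet_eq_PS (l Q : ℕ) : dyckReturnSet l Q = PS (2 * l) 0 Q := by
  ext f
  simp [dyckReturnSet, PS, IsDyckPath, hgt, and_assoc]

lemma PS_finite (n h Q : ℕ) : (PS n h Q).Finite := by
  have hsub : PS n h Q ⊆ Set.range
      (fun g : Fin n → Bool => fun t => if ht : t < n then g ⟨t, ht⟩ else false) := by
    intro f hf
    refine ⟨fun i => f i, ?_⟩
    funext t
    by_cases ht : t < n
    · simp [ht]
    · simp only [dif_neg ht]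
      exact (hf.1 t (le_of_not_gt ht)).symm
  exact (Set.finite_range _).subset hsub

lemma card_filter_shift (P : ℕ → Prop) [DecidablePred P] (n : ℕ) :
    ((Finset.Icc 1 (n + 1)).filter (fun t => P t)).card
      = (if P 1 then 1 else 0) + ((Finset.Icc 1 n).filter (fun t => P (t + 1))).card := by
  have himg : Finset.Icc 1 (n + 1) = (Finset.range (n + 1)).image (· + 1) := by
    ext a
    simp only [Finset.mem_Icc, Finset.mem_image, Finset.mem_range]
    constructor
    · intro ha; exact ⟨a - 1, by omega, by omega⟩
    · rintro ⟨b, hb, rfl⟩; omega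
  rw [himg, Finset.filter_image, Finset.card_image_of_injective _ (add_left_injective 1)]
  have hr : Finset.range (n + 1) = insert 0 (Finset.Icc 1 n) := by
    ext a; simp only [Finset.mem_range, Finset.mem_insert, Finset.mem_Icc]; omega
  rw [hr, Finset.filter_insert]
  by_cases h1 : P 1
  · rw [if_pos (by simpa using h1), if_pos h1,
      Finset.card_insert_of_notMem (by simp), add_comm]
  · rw [if_neg (by simpa using h1), if_neg h1, zero_add]

/-- master membership transfer lemma -/
lemma cns_mem_PS_iff (b : Bool) (f : ℕ → Bool) (n h h' Q : ℕ)
    (hh : (h' : ℤ) = (h : ℤ) + (if b = true then 1 else -1)) :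
    cns b f ∈ PS (n + 1) h Q ↔
      ((if h' = 0 then 1 else 0) ≤ Q ∧ f ∈ PS n h' (Q - (if h' = 0 then 1 else 0))) := by
  have hg1 : ∀ t, hgt h (cns b f) (t + 1) = hgt h' f t := fun t => hgt_cns b h h' f t hh
  have hcard : ((Finset.Icc 1 (n + 1)).filter (fun t => hgt h (cns b f) t = 0)).card
      = (if h' = 0 then 1 else 0)
        + ((Finset.Icc 1 n).filter (fun t => hgt h' f t = 0)).card := by
    rw [card_filter_shift (fun t => hgt h (cns b f) t = 0) n]
    congr 1
    · have : hgt h (cns b f) 1 = (h' : ℤ) := by rw [show (1:ℕ) = 0 + 1 from rfl, hg1, hgt_zero]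
      rw [this]
      by_cases h0 : h' = 0
      · rw [if_pos h0, if_pos (by exact_mod_cast h0)]
      · rw [if_neg h0, if_neg (by exact_mod_cast h0)]
    · congr 1
      apply Finset.filter_congr
      intro t _
      simp [hg1 t]
  constructor
  · rintro ⟨hb, he, hp, hc⟩
    have hfb : ∀ t, n ≤ t → f t = false := by
      intro t ht
      have := hb (t + 1) (by omega)
      simpa [cns] using this
    have hfe : hgt h' f n = 0 := by rw [← hg1 n]; exact he
    have hfp : ∀ t ≤ n, 0 ≤ hgt h' f t := by
      intro t ht
      rw [← hg1 t]; exact hp (t + 1) (by omega)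
    rw [hcard] at hc
    constructor
    · omega
    · exact ⟨hfb, hfe, hfp, by omega⟩
  · rintro ⟨hQ, hfb, hfe, hfp, hc⟩
    refine ⟨?_, ?_, ?_, ?_⟩
    · intro t ht
      obtain ⟨t', rfl⟩ : ∃ t', t = t' + 1 := ⟨t - 1, by omega⟩
      exact hfb t' (by omega)
    · rw [hg1 n]; exact hfe
    · intro t ht
      cases t with
      | zero => rw [hgt_zero]; positivity
      | succ t' => rw [hg1 t']; exact hfp t' (by omega)
    · rw [hcard, hc]; omega



lemma cns_true_mem (f : ℕ → Bool) (n h Q : ℕ) :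
    cns true f ∈ PS (n + 1) h Q ↔ f ∈ PS n (h + 1) Q := by
  rw [cns_mem_PS_iff true f n h (h + 1) Q (by simp)]
  simp

lemma cns_false_mem₂ (f : ℕ → Bool) (n h' Q : ℕ) :
    cns false f ∈ PS (n + 1) (h' + 2) Q ↔ f ∈ PS n (h' + 1) Q := by
  rw [cns_mem_PS_iff false f n (h' + 2) (h' + 1) Q (by simp only [if_neg (by decide : ¬(false = true))]; push_cast; ring)]
  simp

lemma cns_false_mem₁ (f : ℕ → Bool) (n Q : ℕ) :
    cns false f ∈ PS (n + 1) 1 (Q + 1) ↔ f ∈ PS n 0 Q := by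
  rw [cns_mem_PS_iff false f n 1 0 (Q + 1) (by norm_num)]
  simp

lemma cns_false_mem₁₀ (f : ℕ → Bool) (n : ℕ) :
    cns false f ∉ PS (n + 1) 1 0 := by
  rw [cns_mem_PS_iff false f n 1 0 0 (by norm_num)]
  simp

lemma first_true_of_mem_PS₀ {g : ℕ → Bool} {n Q : ℕ} (hg : g ∈ PS (n + 1) 0 Q) :
    g 0 = true := by
  by_contra hb
  have hb' : g 0 = false := by simpa using hb
  have h1 := hg.2.2.1 1 (by omega)
  have hu : upCount g 1 = 0 := by simp [upCount_succ, upCount_zero, hb']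
  have : hgt 0 g 1 = -1 := by simp [hgt, pathHeight, hu]
  omega

lemma first_true_of_mem_PS₁₀ {g : ℕ → Bool} {n : ℕ} (hg : g ∈ PS (n + 1) 1 0) :
    g 0 = true := by
  by_contra hb
  have hb' : g 0 = false := by simpa using hb
  have hgeq : cns false (shft g) = g := by rw [← hb']; exact cns_shft g
  exact cns_false_mem₁₀ (shft g) n (by rw [hgeq]; exact hg)

/-- the three decomposition equations -/
lemma PS_decomp₀ (n Q : ℕ) :
    PS (n + 1) 0 Q = cns true '' PS n 1 Q := by
  ext g
  constructor
  · intro hg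
    have h0 := first_true_of_mem_PS₀ hg
    refine ⟨shft g, ?_, by rw [← h0]; exact cns_shft g⟩
    rw [← cns_true_mem (shft g) n 0 Q, show cns true (shft g) = g by rw [← h0]; exact cns_shft g]
    exact hg
  · rintro ⟨f, hf, rfl⟩
    exact (cns_true_mem f n 0 Q).2 hf

lemma PS_decomp₁₀ (n : ℕ) :
    PS (n + 1) 1 0 = cns true '' PS n 2 0 := by
  ext g
  constructor
  · intro hg
    have h0 := first_true_of_mem_PS₁₀ hg
    refine ⟨shft g, ?_, by rw [← h0]; exact cns_shft g⟩
    rw [← cns_true_mem (shft g) n 1 0, show cns true (shft g) = g by rw [← h0]; exact cns_shft g]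
    exact hg
  · rintro ⟨f, hf, rfl⟩
    exact (cns_true_mem f n 1 0).2 hf

lemma PS_decomp₁ (n Q : ℕ) :
    PS (n + 1) 1 (Q + 1) = cns true '' PS n 2 (Q + 1) ∪ cns false '' PS n 0 Q := by
  ext g
  constructor
  · intro hg
    cases hb : g 0 with
    | true =>
        left
        refine ⟨shft g, ?_, by rw [← hb]; exact cns_shft g⟩
        rw [← cns_true_mem (shft g) n 1 (Q + 1),
          show cns true (shft g) = g by rw [← hb]; exact cns_shft g]
        exact hg
    | false =>
        right
        refine ⟨shft g, ?_, by rw [← hb]; exact cns_shft g⟩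
        rw [← cns_false_mem₁ (shft g) n Q,
          show cns false (shft g) = g by rw [← hb]; exact cns_shft g]
        exact hg
  · rintro (⟨f, hf, rfl⟩ | ⟨f, hf, rfl⟩)
    · exact (cns_true_mem f n 1 (Q + 1)).2 hf
    · exact (cns_false_mem₁ f n Q).2 hf

lemma PS_decomp₂ (n h Q : ℕ) :
    PS (n + 1) (h + 2) Q = cns true '' PS n (h + 3) Q ∪ cns false '' PS n (h + 1) Q := by
  ext g
  constructor
  · intro hg
    cases hb : g 0 with
    | true =>
        left
        refine ⟨shft g, ?_, by rw [← hb]; exact cns_shft g⟩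
        rw [← cns_true_mem (shft g) n (h + 2) Q,
          show cns true (shft g) = g by rw [← hb]; exact cns_shft g]
        exact hg
    | false =>
        right
        refine ⟨shft g, ?_, by rw [← hb]; exact cns_shft g⟩
        rw [← cns_false_mem₂ (shft g) n h Q,
          show cns false (shft g) = g by rw [← hb]; exact cns_shft g]
        exact hg
  · rintro (⟨f, hf, rfl⟩ | ⟨f, hf, rfl⟩)
    · exact (cns_true_mem f n (h + 2) Q).2 hf
    · exact (cns_false_mem₂ f n h Q).2 hf

lemma disj_images (s t : Set (ℕ → Bool)) :
    Disjoint (cns true '' s) (cns false '' t) := by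
  rw [Set.disjoint_left]
  rintro g ⟨f, _, rfl⟩ ⟨f', _, he⟩
  have := congrFun he 0
  simp [cns] at this

def cnt : ℕ → ℕ → ℕ → ℕ
  | 0, h, Q => if h = 0 ∧ Q = 0 then 1 else 0
  | (n + 1), h, Q =>
    cnt n (h + 1) Q +
    (match h, Q with
     | 0, _ => 0
     | 1, 0 => 0
     | 1, (Q + 1) => cnt n 0 Q
     | (h + 2), Q => cnt n (h + 1) Q)

lemma PS_ncard (n : ℕ) : ∀ h Q : ℕ, (PS n h Q).ncard = cnt n h Q := by
  induction n with
  | zero =>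
      intro h Q
      by_cases hh : h = 0 ∧ Q = 0
      · obtain ⟨rfl, rfl⟩ := hh
        have : PS 0 0 0 = {fun _ => false} := by
          ext f
          simp only [PS, Set.mem_setOf_eq, Set.mem_singleton_iff]
          constructor
          · intro hf
            funext t
            exact hf.1 t (by omega)
          · rintro rfl
            refine ⟨fun _ _ => rfl, by simp [hgt_zero], fun t ht => ?_, by simp⟩
            · have : t = 0 := by omega
              subst this; simp [hgt_zero]
        rw [this, cnt]
        simp
      · have : PS 0 h Q = ∅ := by
          ext f
          simp only [PS, Set.mem_setOf_eq, Set.mem_empty_iff_false, iff_false, not_and]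
          intro h1 h2 h3
          have hzero : h = 0 := by
            have := h2; rw [hgt_zero] at this; exact_mod_cast this
          intro hcc
          apply hh
          refine ⟨hzero, ?_⟩
          rw [← hcc]
          simp
        rw [this, cnt, if_neg hh]
        simp
  | succ n ih =>
      intro h Q
      match h, Q with
      | 0, Q =>
          rw [PS_decomp₀, Set.ncard_image_of_injective _ (cns_injective true), ih 1 Q, cnt]
          simp
      | 1, 0 =>
          rw [PS_decomp₁₀, Set.ncard_image_of_injective _ (cns_injective true), ih 2 0, cnt]
          simp
      | 1, (Q + 1) =>
          rw [PS_decomp₁,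
            Set.ncard_union_eq (disj_images _ _)
              ((PS_finite n 2 (Q + 1)).image _) ((PS_finite n 0 Q).image _),
            Set.ncard_image_of_injective _ (cns_injective true),
            Set.ncard_image_of_injective _ (cns_injective false), ih 2 (Q + 1), ih 0 Q, cnt]
      | (h + 2), Q =>
          rw [PS_decomp₂,
            Set.ncard_union_eq (disj_images _ _)
              ((PS_finite n (h + 3) Q).image _) ((PS_finite n (h + 1) Q).image _),
            Set.ncard_image_of_injective _ (cns_injective true),
            Set.ncard_image_of_injective _ (cns_injective false), ih (h + 3) Q, ih (h + 1) Q, cnt]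

lemma dyckReturnSet_ncard (l Q : ℕ) : (dyckReturnSet l Q).ncard = cnt (2 * l) 0 Q := by
  rw [dyckReturnSet_eq_PS, PS_ncard]

def FP : ℕ → ℕ → ℕ
  | 0, x => if x = 0 then 1 else 0
  | (j + 1), x =>
    match x with
    | 0 => 0
    | 1 => (match j with | 0 => 1 | (j' + 1) => FP (j' + 1) 2)
    | (x + 2) => FP j (x + 1) + FP j (x + 3)

lemma FP_zero_left (x : ℕ) : FP 0 x = if x = 0 then 1 else 0 := rfl
lemma FP_succ_zero (j : ℕ) : FP (j + 1) 0 = 0 := rfl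
lemma FP_one_one : FP 1 1 = 1 := rfl
lemma FP_succ_one (j : ℕ) : FP (j + 2) 1 = FP (j + 1) 2 := rfl
lemma FP_succ_succ (j x : ℕ) : FP (j + 1) (x + 2) = FP j (x + 1) + FP j (x + 3) := rfl

lemma FP_eq_zero_of_lt : ∀ j x : ℕ, j < x → FP j x = 0 := by
  intro j
  induction j with
  | zero => intro x hx; rw [FP_zero_left, if_neg (by omega)]
  | succ j ih =>
      intro x hx
      match x, hx with
      | (x + 2), hx =>
          rw [FP_succ_succ, ih (x + 1) (by omega), ih (x + 3) (by omega)]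

lemma FP_self : ∀ j : ℕ, FP j j = 1 := by
  intro j
  induction j with
  | zero => rfl
  | succ j ih =>
      match j, ih with
      | 0, _ => rfl
      | (j + 1), ih =>
          rw [FP_succ_succ, ih, FP_eq_zero_of_lt (j + 1) (j + 3) (by omega)]

lemma FP_closed : ∀ j x : ℕ, x ≤ j → (j - x) % 2 = 0 →
    j * FP j x = x * Nat.choose j ((j - x) / 2) := by
  intro j
  induction j with
  | zero =>
      intro x hx _
      interval_cases x
      simp
  | succ j ih =>
      intro x hx hpar
      match x with
      | 0 => rw [FP_succ_zero]; simp
      | 1 =>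
          have hje : j % 2 = 0 := by omega
          match j, hje with
          | 0, _ => simp [FP_one_one]
          | (j + 1), hje =>
              rw [FP_succ_one]
              obtain ⟨c, hc⟩ : ∃ c, j + 1 = 2 * c := ⟨(j + 1) / 2, by omega⟩
              have hc1 : 1 ≤ c := by omega
              have e1 : (j + 1 + 1 - 1) / 2 = c := by omega
              rw [e1]
              have ihj := ih 2 (by omega) (by omega)
              rw [show (j + 1 - 2) / 2 = c - 1 by omega] at ihj
              have habs : (j + 2) * Nat.choose (j + 1) (c - 1) = Nat.choose (j + 2) c * c := by
                have h := Nat.add_one_mul_choose_eq (j + 1) (c - 1)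
                rw [show c - 1 + 1 = c by omega] at h
                simpa [Nat.succ_eq_add_one] using h
              apply Nat.eq_of_mul_eq_mul_left (show 0 < j + 1 by omega)
              calc (j + 1) * ((j + 1 + 1) * FP (j + 1) 2)
                  = (j + 2) * ((j + 1) * FP (j + 1) 2) := by ring
                _ = (j + 2) * (2 * Nat.choose (j + 1) (c - 1)) := by rw [ihj]
                _ = 2 * ((j + 2) * Nat.choose (j + 1) (c - 1)) := by ring
                _ = 2 * (Nat.choose (j + 2) c * c) := by rw [habs]
                _ = (j + 1) * (1 * Nat.choose (j + 1 + 1) c) := by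
                    have h2 : 2 * (Nat.choose (j + 2) c * c) = (2 * c) * Nat.choose (j + 2) c := by
                      ring
                    rw [h2, ← hc]
                    ring_nf
      | (x + 2) =>
          rw [FP_succ_succ]
          by_cases hle : x + 3 ≤ j
          · -- main case, both IH apply
            have ih1 := ih (x + 1) (by omega) (by omega)
            have ih2 := ih (x + 3) (by omega) (by omega)
            set a := (j + 1 - (x + 2)) / 2 with ha
            have ha1 : (j - (x + 1)) / 2 = a := by omega
            have ha2 : (j - (x + 3)) / 2 = a - 1 := by omega
            have ha3 : 1 ≤ a := by omega
            have haj : a ≤ j := by omega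
            rw [ha1] at ih1; rw [ha2] at ih2
            have habsZ : (Nat.choose j a : ℤ) * a
                = (Nat.choose j (a - 1) : ℤ) * ((j : ℤ) + 1 - a) := by
              have h := Nat.choose_succ_right_eq j (a - 1)
              rw [show a - 1 + 1 = a by omega] at h
              zify [show a - 1 ≤ j by omega, ha3] at h
              linarith
            have hpas : Nat.choose (j + 1) a = Nat.choose j (a - 1) + Nat.choose j a := by
              have h := Nat.choose_succ_succ j (a - 1)
              simpa [Nat.succ_eq_add_one, show a - 1 + 1 = a by omega] using h
            have h2aN : 2 * a + x + 1 = j := by omega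
            apply Nat.eq_of_mul_eq_mul_left (show 0 < j by omega)
            have expand : j * ((j + 1) * (FP j (x + 1) + FP j (x + 3)))
                = (j + 1) * (j * FP j (x + 1)) + (j + 1) * (j * FP j (x + 3)) := by ring
            rw [expand, ih1, ih2, hpas]
            zify
            have h2a : (2 * a : ℤ) = (j : ℤ) - x - 1 := by omega
            linear_combination (-2 : ℤ) * habsZ + (Nat.choose j (a - 1) : ℤ) * h2a
              + (Nat.choose j a : ℤ) * h2a
          · -- x + 3 > j ; parity forces x + 1 = j
            have hxj : x + 1 = j := by omega
            subst hxj
            rw [FP_self, FP_eq_zero_of_lt (x + 1) (x + 3) (by omega)]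
            have e0 : (x + 1 + 1 - (x + 2)) / 2 = 0 := by omega
            rw [e0]
            simp

def Fc (n h Q : ℕ) : ℕ :=
  if h = 0 then FP (n - Q) Q else if Q = 0 then 0 else FP (n + 1 - Q) (h + Q - 1)



lemma Fc_zero (n Q : ℕ) : Fc n 0 Q = FP (n - Q) Q := by rw [Fc, if_pos rfl]

lemma Fc_pos (n h Q : ℕ) (hh : h ≠ 0) :
    Fc n h Q = if Q = 0 then 0 else FP (n + 1 - Q) (h + Q - 1) := by
  rw [Fc, if_neg hh]

lemma cnt_eq_Fc : ∀ n h Q : ℕ, cnt n h Q = Fc n h Q := by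
  intro n
  induction n with
  | zero =>
      intro h Q
      rw [cnt]
      by_cases hh : h = 0
      · subst hh
        rw [Fc_zero, Nat.zero_sub, FP_zero_left]
        by_cases hq : Q = 0
        · subst hq; simp
        · rw [if_neg (by simp [hq]), if_neg hq]
      · rw [Fc_pos _ _ _ hh, if_neg (by simp [hh])]
        by_cases hq : Q = 0
        · rw [if_pos hq]
        · rw [if_neg hq]
          obtain ⟨q, rfl⟩ : ∃ q, Q = q + 1 := ⟨Q - 1, by omega⟩
          rw [show 0 + 1 - (q + 1) = 0 by omega, FP_zero_left, if_neg (by omega)]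
  | succ n ih =>
      intro h Q
      match h, Q with
      | 0, Q =>
          have hstep : cnt (n + 1) 0 Q = cnt n 1 Q := by rw [cnt]; norm_num
          rw [hstep, ih 1 Q, Fc_pos n 1 Q (by omega), Fc_zero]
          by_cases hq : Q = 0
          · rw [if_pos hq, hq, show n + 1 - 0 = n + 1 by omega, FP_succ_zero]
          · rw [if_neg hq, show 1 + Q - 1 = Q by omega]
      | 1, 0 =>
          have hstep : cnt (n + 1) 1 0 = cnt n 2 0 := by
            rw [cnt]; try norm_num
          rw [hstep, ih 2 0, Fc_pos n 2 0 (by omega), Fc_pos (n + 1) 1 0 (by omega),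
            if_pos rfl, if_pos rfl]
      | 1, (Q' + 1) =>
          have hstep : cnt (n + 1) 1 (Q' + 1) = cnt n 2 (Q' + 1) + cnt n 0 Q' := by
            rw [cnt]; try norm_num
          rw [hstep, ih 2 (Q' + 1), ih 0 Q', Fc_zero n Q', Fc_pos n 2 (Q' + 1) (by omega),
            Fc_pos (n + 1) 1 (Q' + 1) (by omega), if_neg (by omega), if_neg (by omega),
            show 2 + (Q' + 1) - 1 = Q' + 2 by omega, show 1 + (Q' + 1) - 1 = Q' + 1 by omega]
          by_cases hle : Q' ≤ n
          · rw [show n + 1 - (Q' + 1) = n - Q' by omega,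
              show n + 1 + 1 - (Q' + 1) = (n - Q') + 1 by omega]
            match Q' with
            | 0 =>
                rw [show n - 0 = n by omega]
                match n with
                | 0 => rfl
                | (n + 1) => rw [FP_succ_one, FP_succ_zero, add_zero]
            | (q + 1) =>
                rw [FP_succ_succ, show q + 1 + 2 = q + 3 by omega, add_comm]
          · rw [show n + 1 - (Q' + 1) = 0 by omega, show n - Q' = 0 by omega,
              show n + 1 + 1 - (Q' + 1) = 0 by omega, FP_zero_left, FP_zero_left, FP_zero_left,
              if_neg (by omega), if_neg (by omega), if_neg (by omega)]
      | (h + 2), Q =>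
          have hstep : cnt (n + 1) (h + 2) Q = cnt n (h + 3) Q + cnt n (h + 1) Q := by
            rw [cnt, show h + 2 + 1 = h + 3 by omega]
          rw [hstep, ih (h + 3) Q, ih (h + 1) Q, Fc_pos n (h + 3) Q (by omega),
            Fc_pos n (h + 1) Q (by omega), Fc_pos (n + 1) (h + 2) Q (by omega)]
          by_cases hq : Q = 0
          · rw [if_pos hq, if_pos hq, if_pos hq]
          · rw [if_neg hq, if_neg hq, if_neg hq]
            obtain ⟨q, rfl⟩ : ∃ q, Q = q + 1 := ⟨Q - 1, by omega⟩
            rw [show h + 3 + (q + 1) - 1 = h + q + 3 by omega,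
              show h + 1 + (q + 1) - 1 = h + q + 1 by omega,
              show h + 2 + (q + 1) - 1 = (h + q) + 2 by omega]
            by_cases hle : q + 1 ≤ n + 1
            · rw [show n + 1 + 1 - (q + 1) = (n + 1 - (q + 1)) + 1 by omega, FP_succ_succ,
                show h + q + 1 + 2 = h + q + 3 by omega, add_comm]
            · rw [show n + 1 - (q + 1) = 0 by omega, show n + 1 + 1 - (q + 1) = 0 by omega,
                FP_zero_left, FP_zero_left, FP_zero_left, if_neg (by omega), if_neg (by omega),
                if_neg (by omega)]

lemma dyck_ncard_FP (l Q : ℕ) : (dyckReturnSet l Q).ncard = FP (2 * l - Q) Q := by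
  rw [dyckReturnSet_ncard, cnt_eq_Fc, Fc_zero]

lemma dyck_ncard_l0 (Q : ℕ) : (dyckReturnSet 0 Q).ncard = if Q = 0 then 1 else 0 := by
  rw [dyck_ncard_FP, show 2 * 0 - Q = 0 by omega, FP_zero_left]

lemma dyck_ncard_Q0 (l : ℕ) (hl : 1 ≤ l) : (dyckReturnSet l 0).ncard = 0 := by
  rw [dyck_ncard_FP, show 2 * l - 0 = (2 * l - 1) + 1 by omega, FP_succ_zero]

lemma dyck_ncard_key (l Q : ℕ) (hl : 1 ≤ l) (hQ1 : 1 ≤ Q) (hQl : Q ≤ l) :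
    l * (dyckReturnSet l Q).ncard = Q * Nat.choose (2 * l - Q - 1) (l - 1) := by
  rw [dyck_ncard_FP]
  have hclosed := FP_closed (2 * l - Q) Q (by omega) (by omega)
  rw [show (2 * l - Q - Q) / 2 = l - Q by omega] at hclosed
  have hsymm : Nat.choose (2 * l - Q) (l - Q) = Nat.choose (2 * l - Q) l := by
    rw [show l - Q = 2 * l - Q - l by omega, Nat.choose_symm (by omega)]
  have habs : (2 * l - Q) * Nat.choose (2 * l - Q - 1) (l - 1) = Nat.choose (2 * l - Q) l * l := by
    have h := Nat.add_one_mul_choose_eq (2 * l - Q - 1) (l - 1)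
    rw [show 2 * l - Q - 1 + 1 = 2 * l - Q by omega, show l - 1 + 1 = l by omega] at h
    exact h
  apply Nat.eq_of_mul_eq_mul_left (show 0 < 2 * l - Q by omega)
  calc (2 * l - Q) * (l * FP (2 * l - Q) Q)
      = l * ((2 * l - Q) * FP (2 * l - Q) Q) := by ring
    _ = l * (Q * Nat.choose (2 * l - Q) (l - Q)) := by rw [hclosed]
    _ = Q * (Nat.choose (2 * l - Q) l * l) := by rw [hsymm]; ring
    _ = Q * ((2 * l - Q) * Nat.choose (2 * l - Q - 1) (l - 1)) := by rw [habs]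
    _ = (2 * l - Q) * (Q * Nat.choose (2 * l - Q - 1) (l - 1)) := by ring

def uu (l m Q : ℕ) : ℚ :=
  (Nat.choose (2 * l - Q - 1) (l - 1) : ℚ) * (Nat.choose (l - Q + m - 1) (m - l) : ℚ)

def XX (l m : ℕ) (q : ℚ) : ℚ :=
  (m : ℚ) * q ^ 2 - ((m : ℚ) ^ 2 + (l : ℚ) * m - l) * q - (l : ℚ) * ((m : ℚ) + l)

lemma choose_pred_row (n r : ℕ) (h : r < n) :
    (n - r) * Nat.choose n r = n * Nat.choose (n - 1) r := by
  have h1 := Nat.choose_succ_right_eq n r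
  have h2 := Nat.add_one_mul_choose_eq (n - 1) r
  rw [show n - 1 + 1 = n by omega] at h2
  calc (n - r) * Nat.choose n r = Nat.choose n r * (n - r) := mul_comm _ _
    _ = Nat.choose n (r + 1) * (r + 1) := h1.symm
    _ = n * Nat.choose (n - 1) r := h2.symm

lemma cert (l m Q : ℕ) (hl : 1 ≤ l) (hlm : l ≤ m) (hQ : Q < l) :
    (m : ℚ) * ((m : ℚ) + 1) * (Q : ℚ) * uu l m Q
      = XX l m ((Q : ℚ) + 1) * uu l m (Q + 1) - XX l m (Q : ℚ) * uu l m Q := by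
  set A := (Nat.choose (2 * l - Q - 1) (l - 1) : ℚ) with hA_def
  set B := (Nat.choose (l - Q + m - 1) (m - l) : ℚ) with hB_def
  set A' := (Nat.choose (2 * l - Q - 1 - 1) (l - 1) : ℚ) with hA'_def
  set B' := (Nat.choose (l - Q + m - 1 - 1) (m - l) : ℚ) with hB'_def
  have hu : uu l m Q = A * B := rfl
  have hu' : uu l m (Q + 1) = A' * B' := by
    rw [uu, show 2 * l - (Q + 1) - 1 = 2 * l - Q - 1 - 1 by omega,
      show l - (Q + 1) + m - 1 = l - Q + m - 1 - 1 by omega]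
  have c1 : ((2 * l - Q - 1 : ℕ) : ℚ) = 2 * (l : ℚ) - (Q : ℚ) - 1 := by
    have h : (2 * l - Q - 1) + (Q + 1) = 2 * l := by omega
    have := congrArg (Nat.cast : ℕ → ℚ) h
    push_cast at this; linarith
  have c2 : ((l - Q + m - 1 : ℕ) : ℚ) = (l : ℚ) + (m : ℚ) - (Q : ℚ) - 1 := by
    have h : (l - Q + m - 1) + (Q + 1) = l + m := by omega
    have := congrArg (Nat.cast : ℕ → ℚ) h
    push_cast at this; linarith
  have c3 : ((l - Q : ℕ) : ℚ) = (l : ℚ) - (Q : ℚ) := by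
    have h : (l - Q) + Q = l := by omega
    have := congrArg (Nat.cast : ℕ → ℚ) h
    push_cast at this; linarith
  have hA : ((l : ℚ) - Q) * A = (2 * (l : ℚ) - Q - 1) * A' := by
    have h := choose_pred_row (2 * l - Q - 1) (l - 1) (by omega)
    rw [show 2 * l - Q - 1 - (l - 1) = l - Q by omega] at h
    have hc := congrArg (Nat.cast : ℕ → ℚ) h
    push_cast at hc
    rw [c3, c1] at hc
    exact hc
  have hB : (2 * (l : ℚ) - Q - 1) * B = ((l : ℚ) + m - Q - 1) * B' := by
    have h := choose_pred_row (l - Q + m - 1) (m - l) (by omega)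
    rw [show l - Q + m - 1 - (m - l) = 2 * l - Q - 1 by omega] at h
    have hc := congrArg (Nat.cast : ℕ → ℚ) h
    push_cast at hc
    rw [c1, c2] at hc
    exact hc
  have hQl : (Q : ℚ) + 1 ≤ (l : ℚ) := by exact_mod_cast hQ
  have hl1 : (1 : ℚ) ≤ (l : ℚ) := by exact_mod_cast hl
  have hml : (l : ℚ) ≤ (m : ℚ) := by exact_mod_cast hlm
  have hden : (2 * (l : ℚ) - Q - 1) ≠ 0 := by
    have : (0 : ℚ) < 2 * (l : ℚ) - Q - 1 := by linarith
    exact ne_of_gt this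
  have hD : ((l : ℚ) + m - Q - 1) ≠ 0 := by
    have : (0 : ℚ) < (l : ℚ) + m - Q - 1 := by linarith
    exact ne_of_gt this
  have hmul : (((l : ℚ) - Q) * A) * ((2 * (l : ℚ) - Q - 1) * B)
      = ((2 * (l : ℚ) - Q - 1) * A') * (((l : ℚ) + m - Q - 1) * B') := by
    rw [hA, hB]
  have hAB : ((l : ℚ) + m - Q - 1) * (A' * B') = ((l : ℚ) - Q) * (A * B) := by
    apply mul_left_cancel₀ hden
    linear_combination - hmul
  rw [hu, hu']
  apply mul_left_cancel₀ hD
  simp only [XX]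
  linear_combination (-((m : ℚ) * ((Q : ℚ) + 1) ^ 2 - ((m : ℚ) ^ 2 + (l : ℚ) * m - l) * ((Q : ℚ) + 1)
    - (l : ℚ) * ((m : ℚ) + l))) * hAB

lemma inner_sum (l m : ℕ) (hl : 1 ≤ l) (hlm : l ≤ m) :
    (m : ℚ) * ((m : ℚ) + 1) * (∑ Q ∈ Finset.range (l + 1), (Q : ℚ) * uu l m Q)
      = (l : ℚ) * ((l : ℚ) + m) * uu l m 0 := by
  rw [Finset.sum_range_succ, mul_add, Finset.mul_sum]
  have htel : ∑ Q ∈ Finset.range l, (m : ℚ) * ((m : ℚ) + 1) * ((Q : ℚ) * uu l m Q)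
      = XX l m (l : ℚ) * uu l m l - XX l m 0 * uu l m 0 := by
    have h0 : XX l m ((0 : ℕ) : ℚ) * uu l m 0 = XX l m 0 * uu l m 0 := by norm_num
    rw [← h0, ← Finset.sum_range_sub (fun Q => XX l m (Q : ℚ) * uu l m Q) l]
    apply Finset.sum_congr rfl
    intro Q hQ
    have hc := cert l m Q hl hlm (Finset.mem_range.mp hQ)
    push_cast
    push_cast at hc
    linarith [hc]
  rw [htel]
  have hX : XX l m (l : ℚ) = -((m : ℚ) * ((m : ℚ) + 1) * (l : ℚ)) := by
    simp only [XX]; ring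
  have hX0 : XX l m 0 = -((l : ℚ) * ((m : ℚ) + (l : ℚ))) := by
    simp only [XX]; ring
  rw [hX, hX0]
  ring

lemma fact_ne (n : ℕ) : ((n.factorial : ℚ)) ≠ 0 := by
  exact_mod_cast n.factorial_ne_zero

lemma conn (l m : ℕ) (hl : 1 ≤ l) (hlm : l ≤ m) :
    ((l : ℚ) + m) * uu l m 0
      = ((m : ℚ) + 1) * (Nat.choose m l : ℚ) * (Nat.choose (m + l) (m + 1) : ℚ) := by
  have hu0 : uu l m 0 = (Nat.choose (2 * l - 1) (l - 1) : ℚ)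
      * (Nat.choose (l + m - 1) (m - l) : ℚ) := by
    rw [uu, show 2 * l - 0 - 1 = 2 * l - 1 by omega, show l - 0 + m - 1 = l + m - 1 by omega]
  rw [hu0]
  have h1 : (Nat.choose (2 * l - 1) (l - 1) : ℚ)
      = ((2 * l - 1).factorial : ℚ) / ((l - 1).factorial * (l.factorial : ℚ)) := by
    rw [Nat.cast_choose ℚ (show l - 1 ≤ 2 * l - 1 by omega),
      show 2 * l - 1 - (l - 1) = l by omega]
  have h2 : (Nat.choose (l + m - 1) (m - l) : ℚ)
      = ((l + m - 1).factorial : ℚ) / ((m - l).factorial * ((2 * l - 1).factorial : ℚ)) := by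
    rw [Nat.cast_choose ℚ (show m - l ≤ l + m - 1 by omega),
      show l + m - 1 - (m - l) = 2 * l - 1 by omega]
  have h3 : (Nat.choose m l : ℚ)
      = (m.factorial : ℚ) / (l.factorial * ((m - l).factorial : ℚ)) := by
    rw [Nat.cast_choose ℚ hlm]
  have h4 : (Nat.choose (m + l) (m + 1) : ℚ)
      = ((m + l).factorial : ℚ) / ((m + 1).factorial * ((l - 1).factorial : ℚ)) := by
    rw [Nat.cast_choose ℚ (show m + 1 ≤ m + l by omega),
      show m + l - (m + 1) = l - 1 by omega]
  rw [h1, h2, h3, h4]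
  have k1 : ((m + l).factorial : ℚ) = ((m : ℚ) + l) * ((l + m - 1).factorial : ℚ) := by
    have hf : (m + l).factorial = (m + l) * (l + m - 1).factorial := by
      rw [show m + l = (l + m - 1) + 1 by omega, Nat.factorial_succ]
    rw [hf]
    push_cast
    ring
  have k2 : ((m + 1).factorial : ℚ) = ((m : ℚ) + 1) * (m.factorial : ℚ) := by
    rw [Nat.factorial_succ]
    push_cast
    ring
  rw [k1, k2]
  have n1 := fact_ne (l - 1)
  have n2 := fact_ne l
  have n3 := fact_ne (m - l)
  have n4 := fact_ne (2 * l - 1)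
  have n5 := fact_ne m
  have n6 := fact_ne (l + m - 1)
  have nm : ((m : ℚ) + 1) ≠ 0 := by positivity
  field_simp
  ring

lemma outer_pt (k m j : ℕ) (hjk : j + 1 ≤ k) (hjm : j + 1 ≤ m) :
    (k : ℚ) * (Nat.choose m (j + 1) : ℚ) * (Nat.choose (m + j + 1) (m + 1) : ℚ)
        * (Nat.choose (k + m) (k - 1 - j) : ℚ)
      = (m : ℚ) * (Nat.choose (k + m) (k - 1) : ℚ) * (Nat.choose (m - 1) j : ℚ)
        * (Nat.choose k (j + 1) : ℚ) := by
  have h1 : (Nat.choose m (j + 1) : ℚ)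
      = (m.factorial : ℚ) / ((j + 1).factorial * ((m - 1 - j).factorial : ℚ)) := by
    rw [Nat.cast_choose ℚ hjm, show m - (j + 1) = m - 1 - j by omega]
  have h2 : (Nat.choose (m + j + 1) (m + 1) : ℚ)
      = ((m + j + 1).factorial : ℚ) / ((m + 1).factorial * (j.factorial : ℚ)) := by
    rw [Nat.cast_choose ℚ (show m + 1 ≤ m + j + 1 by omega),
      show m + j + 1 - (m + 1) = j by omega]
  have h3 : (Nat.choose (k + m) (k - 1 - j) : ℚ)
      = ((k + m).factorial : ℚ) / ((k - 1 - j).factorial * ((m + j + 1).factorial : ℚ)) := by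
    rw [Nat.cast_choose ℚ (show k - 1 - j ≤ k + m by omega),
      show k + m - (k - 1 - j) = m + j + 1 by omega]
  have h4 : (Nat.choose (k + m) (k - 1) : ℚ)
      = ((k + m).factorial : ℚ) / ((k - 1).factorial * ((m + 1).factorial : ℚ)) := by
    rw [Nat.cast_choose ℚ (show k - 1 ≤ k + m by omega),
      show k + m - (k - 1) = m + 1 by omega]
  have h5 : (Nat.choose (m - 1) j : ℚ)
      = ((m - 1).factorial : ℚ) / (j.factorial * ((m - 1 - j).factorial : ℚ)) := by
    rw [Nat.cast_choose ℚ (show j ≤ m - 1 by omega), show m - 1 - j = m - 1 - j from rfl]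
  have h6 : (Nat.choose k (j + 1) : ℚ)
      = (k.factorial : ℚ) / ((j + 1).factorial * ((k - 1 - j).factorial : ℚ)) := by
    rw [Nat.cast_choose ℚ (show j + 1 ≤ k by omega), show k - (j + 1) = k - 1 - j by omega]
  rw [h1, h2, h3, h4, h5, h6]
  have k1 : (m.factorial : ℚ) = (m : ℚ) * ((m - 1).factorial : ℚ) := by
    have hf : m.factorial = m * (m - 1).factorial := by
      rw [show m = (m - 1) + 1 by omega, Nat.factorial_succ]
      congr 1 <;> omega
    rw [hf]; push_cast; ring
  have k2 : (k.factorial : ℚ) = (k : ℚ) * ((k - 1).factorial : ℚ) := by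
    have hf : k.factorial = k * (k - 1).factorial := by
      rw [show k = (k - 1) + 1 by omega, Nat.factorial_succ]
      congr 1 <;> omega
    rw [hf]; push_cast; ring
  rw [k1, k2]
  have n1 := fact_ne (j + 1)
  have n2 := fact_ne (m - 1 - j)
  have n3 := fact_ne (m + 1)
  have n4 := fact_ne j
  have n5 := fact_ne (k - 1 - j)
  have n6 := fact_ne (m + j + 1)
  have n7 := fact_ne (k - 1)
  have n8 := fact_ne (m - 1)
  field_simp

lemma vdm (k m : ℕ) (hk : 1 ≤ k) (hm : 1 ≤ m) :
    ∑ j ∈ Finset.range (min k m), (Nat.choose (m - 1) j * Nat.choose k (j + 1) : ℕ)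
      = Nat.choose (k + m - 1) (k - 1) := by
  have hv := Nat.add_choose_eq (m - 1) k (k - 1)
  rw [Finset.Nat.sum_antidiagonal_eq_sum_range_succ_mk] at hv
  rw [show k + m - 1 = (m - 1) + k by omega, hv,
    show (k - 1).succ = k by omega]
  have hsymm : ∀ j ∈ Finset.range k, Nat.choose (m - 1) j * Nat.choose k (k - 1 - j)
      = Nat.choose (m - 1) j * Nat.choose k (j + 1) := by
    intro j hj
    have hj' : j + 1 ≤ k := by
      have := Finset.mem_range.mp hj; omega
    rw [show k - 1 - j = k - (j + 1) by omega, Nat.choose_symm hj']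
  rw [Finset.sum_congr rfl hsymm]
  apply Finset.sum_subset
  · intro x hx
    rw [Finset.mem_range] at *
    omega
  · intro x hx hnx
    rw [Finset.mem_range] at *
    have hxm : m ≤ x := by omega
    rw [Nat.choose_eq_zero_of_lt (by omega), zero_mul]

end NA

open NA in
/-- Decomposition of the Narayana number `N(s,k) = (1/s) C(s,k) C(s,k-1)` as
`Σ_{l=0}^{min(k,s-k)} Σ_{Q=0}^{l} D(l,Q) C(l-Q+s-k-1, s-k-l) C(s, k-l)`,
where `D(l,Q)` counts Dyck paths of length `2l` with exactly `Q` returns to 0. -/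
theorem narayana_decomposition (s k : ℕ) (hk1 : 1 ≤ k) (hks : k ≤ s) :
    (1 / (s : ℚ)) * (s.choose k : ℚ) * (s.choose (k - 1) : ℚ)
      = ∑ l ∈ Finset.range (min k (s - k) + 1), ∑ Q ∈ Finset.range (l + 1),
          ((dyckReturnSet l Q).ncard : ℚ) *
            ((l - Q + s - k - 1).choose (s - k - l) : ℚ) *
            (s.choose (k - l) : ℚ) := by
  obtain ⟨m, rfl⟩ : ∃ m, s = k + m := ⟨s - k, by omega⟩
  by_cases hm0 : m = 0
  · subst hm0
    rw [show k + 0 - k = 0 by omega, show min k 0 = 0 by omega,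
      Finset.sum_range_one, Finset.sum_range_one, dyck_ncard_l0, if_pos rfl]
    have hck : k.choose (k - 1) = k := by
      rw [Nat.choose_symm (show 1 ≤ k from hk1), Nat.choose_one_right]
    have hk0 : (k : ℚ) ≠ 0 := by
      have : (0 : ℚ) < k := by exact_mod_cast hk1
      exact this.ne'
    simp only [Nat.add_zero, Nat.sub_zero, Nat.zero_sub, Nat.sub_self, Nat.choose_self,
      Nat.choose_zero_right, hck]
    push_cast
    field_simp
  · -- main case : m ≥ 1
    have hm1 : 1 ≤ m := by omega
    rw [show k + m - k = m by omega]
    set L := min k m with hL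
    have hL1 : 1 ≤ L := by omega
    have hLk : L ≤ k := by omega
    have hLm : L ≤ m := by omega
    have hkQ : (0 : ℚ) < k := by exact_mod_cast hk1
    have hmQ : (0 : ℚ) < m := by exact_mod_cast hm1
    have hsQ : (0 : ℚ) < (k : ℚ) + m := by linarith
    -- inner sum evaluation
    have hinner : ∀ l, 1 ≤ l → l ≤ L →
        (m : ℚ) * (∑ Q ∈ Finset.range (l + 1), ((dyckReturnSet l Q).ncard : ℚ) *
            ((l - Q + (k + m) - k - 1).choose (m - l) : ℚ))
          = (Nat.choose m l : ℚ) * (Nat.choose (m + l) (m + 1) : ℚ) := by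
      intro l hl1 hlL
      have hlm : l ≤ m := le_trans hlL hLm
      set A : ℚ := ∑ Q ∈ Finset.range (l + 1), ((dyckReturnSet l Q).ncard : ℚ) *
          ((l - Q + (k + m) - k - 1).choose (m - l) : ℚ) with hA
      have E1 : (l : ℚ) * A = ∑ Q ∈ Finset.range (l + 1), (Q : ℚ) * uu l m Q := by
        rw [hA, Finset.mul_sum]
        apply Finset.sum_congr rfl
        intro Q hQ
        have hQl : Q ≤ l := by
          have := Finset.mem_range.mp hQ; omega
        rw [show l - Q + (k + m) - k - 1 = l - Q + m - 1 by omega]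
        rcases Nat.eq_zero_or_pos Q with rfl | hQ1
        · rw [dyck_ncard_Q0 l hl1]
          simp
        · have hkey := dyck_ncard_key l Q hl1 hQ1 hQl
          have hkeyQ : (l : ℚ) * ((dyckReturnSet l Q).ncard : ℚ)
              = (Q : ℚ) * ((2 * l - Q - 1).choose (l - 1) : ℚ) := by
            exact_mod_cast congrArg (Nat.cast : ℕ → ℚ) hkey
          rw [uu]
          linear_combination ((Nat.choose (l - Q + m - 1) (m - l) : ℚ)) * hkeyQ
      have E2 := inner_sum l m hl1 hlm
      have E3 := conn l m hl1 hlm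
      have hcan : ((m : ℚ) + 1) * (l : ℚ) ≠ 0 := by
        have hlQ : (0 : ℚ) < l := by exact_mod_cast hl1
        positivity
      apply mul_left_cancel₀ hcan
      linear_combination (m : ℚ) * ((m : ℚ) + 1) * E1 + E2 + (l : ℚ) * E3
    -- kill the l = 0 term
    have h0 : (∑ Q ∈ Finset.range (0 + 1), ((dyckReturnSet 0 Q).ncard : ℚ) *
        ((0 - Q + (k + m) - k - 1).choose (m - 0) : ℚ) *
        ((k + m).choose (k - 0) : ℚ)) = 0 := by
      rw [Finset.sum_range_one, show 0 - 0 + (k + m) - k - 1 = m - 1 by omega,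
        show m - 0 = m by omega, Nat.choose_eq_zero_of_lt (show m - 1 < m by omega)]
      simp
    have hcan2 : (k : ℚ) * m ≠ 0 := by positivity
    apply mul_left_cancel₀ hcan2
    rw [Finset.sum_range_succ' _ L, h0, add_zero, Finset.mul_sum]
    -- pointwise outer evaluation
    have houter : ∀ j ∈ Finset.range L,
        (k : ℚ) * m * (∑ Q ∈ Finset.range (j + 1 + 1), ((dyckReturnSet (j + 1) Q).ncard : ℚ) *
            (((j + 1) - Q + (k + m) - k - 1).choose (m - (j + 1)) : ℚ) *
            ((k + m).choose (k - (j + 1)) : ℚ))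
          = (m : ℚ) * ((k + m).choose (k - 1) : ℚ) *
            (((m - 1).choose j : ℚ) * (k.choose (j + 1) : ℚ)) := by
      intro j hj
      have hjL : j < L := Finset.mem_range.mp hj
      have hfact : ∑ Q ∈ Finset.range (j + 1 + 1), ((dyckReturnSet (j + 1) Q).ncard : ℚ) *
            (((j + 1) - Q + (k + m) - k - 1).choose (m - (j + 1)) : ℚ) *
            ((k + m).choose (k - (j + 1)) : ℚ)
          = (∑ Q ∈ Finset.range (j + 1 + 1), ((dyckReturnSet (j + 1) Q).ncard : ℚ) *
            (((j + 1) - Q + (k + m) - k - 1).choose (m - (j + 1)) : ℚ)) *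
            ((k + m).choose (k - (j + 1)) : ℚ) := by
        rw [Finset.sum_mul]
      rw [hfact]
      have hin := hinner (j + 1) (by omega) (by omega)
      have hpt := outer_pt k m j (by omega) (by omega)
      rw [show m + (j + 1) = m + j + 1 by omega] at hin
      rw [show k - (j + 1) = k - 1 - j by omega]
      calc (k : ℚ) * m * ((∑ Q ∈ Finset.range (j + 1 + 1), ((dyckReturnSet (j + 1) Q).ncard : ℚ) *
              (((j + 1) - Q + (k + m) - k - 1).choose (m - (j + 1)) : ℚ)) *
              ((k + m).choose (k - 1 - j) : ℚ))
          = (k : ℚ) * (((m : ℚ) * (∑ Q ∈ Finset.range (j + 1 + 1),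
              ((dyckReturnSet (j + 1) Q).ncard : ℚ) *
              (((j + 1) - Q + (k + m) - k - 1).choose (m - (j + 1)) : ℚ))) *
              ((k + m).choose (k - 1 - j) : ℚ)) := by ring
        _ = (k : ℚ) * ((Nat.choose m (j + 1) : ℚ) * (Nat.choose (m + j + 1) (m + 1) : ℚ) *
              ((k + m).choose (k - 1 - j) : ℚ)) := by rw [hin]
        _ = (m : ℚ) * ((k + m).choose (k - 1) : ℚ) *
              (((m - 1).choose j : ℚ) * (k.choose (j + 1) : ℚ)) := by
            linear_combination hpt
    rw [Finset.sum_congr rfl houter, ← Finset.mul_sum]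
    have hvdm : (∑ j ∈ Finset.range L, (((m - 1).choose j : ℚ) * (k.choose (j + 1) : ℚ)))
        = ((k + m - 1).choose (k - 1) : ℚ) := by
      rw [hL]
      exact_mod_cast congrArg (Nat.cast : ℕ → ℚ) (vdm k m hk1 hm1)
    rw [hvdm]
    -- final numeric identity
    have habs : (k : ℚ) * ((k + m).choose k : ℚ)
        = ((k : ℚ) + m) * ((k + m - 1).choose (k - 1) : ℚ) := by
      have h := Nat.add_one_mul_choose_eq (k + m - 1) (k - 1)
      rw [show k + m - 1 + 1 = k + m by omega,
        show k - 1 + 1 = k by omega] at h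
      have hq := congrArg (Nat.cast : ℕ → ℚ) h
      push_cast at hq
      linarith [hq]
    have hsne : ((k : ℚ) + m) ≠ 0 := hsQ.ne'
    have hcast : ((k + m : ℕ) : ℚ) = (k : ℚ) + m := by push_cast; ring
    rw [hcast]
    field_simp
    linear_combination (((k + m).choose (k - 1)) : ℚ) * habs
end

section
/- Let γ ≥ 1, σ > 0, u₊ = σ²(1+√γ)², and let s_N be a sequence of positive integers with s_N → ∞. Then Σ_{k=1}^{s_N} (N/s_N) C(s_N,k) C(s_N,k-1) γ^k σ^{2s_N} = O(u₊^{s_N}) provided N = O(s_N^{3/2}) (in particular for s_N ~ c N^{2/3}). -/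
open Filter

private def aT (s : ℕ) (x : ℝ) (k : ℕ) : ℝ := (s.choose k : ℝ) * x ^ k

private lemma aT_nonneg (s : ℕ) (x : ℝ) (hx : 0 ≤ x) (k : ℕ) : 0 ≤ aT s x k :=
  mul_nonneg (Nat.cast_nonneg _) (pow_nonneg hx _)

private lemma aT_sum (s : ℕ) (x : ℝ) :
    ∑ k ∈ Finset.range (s+1), aT s x k = (x+1)^s := by
  rw [add_pow]
  exact Finset.sum_congr rfl fun k _ => by simp [aT]; ring

private lemma aT_succ (s : ℕ) (x : ℝ) (k : ℕ) (hk : k ≤ s) :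
    aT s x (k+1) * ((k:ℝ)+1) = aT s x k * (x * ((s:ℝ)-(k:ℝ))) := by
  have h := Nat.choose_succ_right_eq s k
  have h' : (s.choose (k+1):ℝ) * ((k:ℝ)+1) = (s.choose k:ℝ) * ((s:ℝ)-(k:ℝ)) := by
    rw [show (s:ℝ)-(k:ℝ) = ((s-k : ℕ) : ℝ) by rw [Nat.cast_sub hk]]
    exact_mod_cast h
  unfold aT
  linear_combination x^(k+1) * h'

set_option maxHeartbeats 1000000 in
private lemma max_term (x : ℝ) (hx : 1 ≤ x) (s : ℕ) (hs : 15 ≤ s) (k : ℕ) :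
    Real.sqrt s * aT s x k ≤ Real.exp (4*(1+x)) * (x+1)^s := by
  have hx0 : (0:ℝ) < x := by linarith
  have h1x : (0:ℝ) < 1 + x := by linarith
  set s' : ℝ := (s:ℝ)+1 with hs'def
  have hs16 : (16:ℝ) ≤ s' := by
    have : (15:ℝ) ≤ (s:ℝ) := by exact_mod_cast hs
    simp only [hs'def]; linarith
  have hs'pos : (0:ℝ) < s' := by linarith
  obtain ⟨m, hm_mem, hm_max⟩ := Finset.exists_max_image (Finset.range (s+1)) (aT s x)
    ⟨0, by simp⟩
  have hms : m ≤ s := by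
    have := Finset.mem_range.mp hm_mem; omega
  -- upper bound for m
  have hmu : (m:ℝ)*(1+x) ≤ x*s' := by
    rcases m with _ | k
    · simp only [Nat.cast_zero, zero_mul]; positivity
    · have hks : k + 1 ≤ s := hms
      have hk_le : k ≤ s := by omega
      have hineq : aT s x k ≤ aT s x (k+1) :=
        hm_max k (Finset.mem_range.mpr (by omega))
      have hApos : (0:ℝ) < (s.choose k : ℝ) * x^k := by
        have := Nat.choose_pos hk_le
        positivity
      have h3 : ((s.choose k : ℝ) * x^k) * ((k:ℝ)+1)
          ≤ ((s.choose k : ℝ) * x^k) * (((s:ℝ)-(k:ℝ))*x) := by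
        have h2 := mul_le_mul_of_nonneg_right hineq (show (0:ℝ) ≤ (k:ℝ)+1 by positivity)
        have e := aT_succ s x k hk_le
        calc ((s.choose k : ℝ) * x^k) * ((k:ℝ)+1) = aT s x k * ((k:ℝ)+1) := by rw [aT]
          _ ≤ aT s x (k+1) * ((k:ℝ)+1) := h2
          _ = aT s x k * (x*((s:ℝ)-(k:ℝ))) := e
          _ = ((s.choose k : ℝ) * x^k) * (((s:ℝ)-(k:ℝ))*x) := by rw [aT]; ring
      have h4 : ((k:ℝ)+1) ≤ ((s:ℝ)-(k:ℝ))*x := le_of_mul_le_mul_left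
        (by calc ((s.choose k : ℝ) * x^k) * ((k:ℝ)+1) ≤ _ := h3) hApos
      push_cast
      simp only [hs'def]
      nlinarith [h4]
  -- lower bound for m
  have hml : x*s' ≤ ((m:ℝ)+1)*(1+x) := by
    by_cases hmlt : m < s
    · have hineq : aT s x (m+1) ≤ aT s x m :=
        hm_max (m+1) (Finset.mem_range.mpr (by omega))
      have hApos : (0:ℝ) < (s.choose m : ℝ) * x^m := by
        have := Nat.choose_pos hms
        positivity
      have h3 : ((s.choose m : ℝ) * x^m) * (((s:ℝ)-(m:ℝ))*x)
          ≤ ((s.choose m : ℝ) * x^m) * ((m:ℝ)+1) := by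
        have h2 := mul_le_mul_of_nonneg_right hineq (show (0:ℝ) ≤ (m:ℝ)+1 by positivity)
        have e := aT_succ s x m hms
        calc ((s.choose m : ℝ) * x^m) * (((s:ℝ)-(m:ℝ))*x)
            = aT s x m * (x*((s:ℝ)-(m:ℝ))) := by rw [aT]; ring
          _ = aT s x (m+1) * ((m:ℝ)+1) := e.symm
          _ ≤ aT s x m * ((m:ℝ)+1) := h2
          _ = ((s.choose m : ℝ) * x^m) * ((m:ℝ)+1) := by rw [aT]
      have h4 : ((s:ℝ)-(m:ℝ))*x ≤ (m:ℝ)+1 := le_of_mul_le_mul_left h3 hApos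
      simp only [hs'def]
      nlinarith [h4]
    · have hm_eq : m = s := by omega
      subst hm_eq
      simp only [hs'def]
      nlinarith [Nat.cast_nonneg (α := ℝ) m]
  have hm_half : s'/2 ≤ (m:ℝ)+1 := by
    nlinarith [hml, mul_nonneg (show (0:ℝ) ≤ s' by linarith) (show (0:ℝ) ≤ x-1 by linarith)]
  set J : ℕ := Nat.sqrt (s+1) with hJdef
  have hJ2 : ((J:ℝ))^2 ≤ s' := by
    have := Nat.sqrt_le' (s+1)
    simp only [hs'def]
    exact_mod_cast this
  have hJub : (J:ℝ) ≤ s'/4 := by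
    nlinarith [sq_nonneg ((J:ℝ)-4), hJ2, hs16]
  have hsucc : s' ≤ ((J:ℝ)+1)^2 := by
    have h := Nat.lt_succ_sqrt (s+1)
    have h' : ((s:ℝ)+1) < ((J:ℝ)+1)*((J:ℝ)+1) := by exact_mod_cast h
    simp only [hs'def, pow_two]
    linarith
  have hJm : (J:ℝ) ≤ (m:ℝ) := by linarith
  have hJm' : J ≤ m := by exact_mod_cast hJm
  set u : ℝ := 4*(1+x)*(J:ℝ)/s' with hu
  have hu0 : (0:ℝ) ≤ u := by
    rw [hu]
    exact div_nonneg (by positivity) (by linarith)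
  -- step bound
  have hstep : ∀ i, 1 ≤ i → i ≤ J → aT s x (m-i+1) ≤ (1+u) * aT s x (m-i) := by
    intro i h1 h2
    set k := m - i with hkdef
    have hkm : k + i = m := by omega
    have hks : k ≤ s := by omega
    have hmk : (m:ℝ) = (k:ℝ) + (i:ℝ) := by exact_mod_cast hkm.symm
    have hiJ : (i:ℝ) ≤ (J:ℝ) := by exact_mod_cast h2
    have hk1 : s'/4 ≤ (k:ℝ)+1 := by linarith
    have hu4 : u * (s'/4) = (1+x)*(J:ℝ) := by
      rw [hu]; field_simp
    have hu_k : (1+x)*(i:ℝ) ≤ u*((k:ℝ)+1) := by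
      calc (1+x)*(i:ℝ) ≤ (1+x)*(J:ℝ) := by
            exact mul_le_mul_of_nonneg_left hiJ (by linarith)
        _ = u * (s'/4) := hu4.symm
        _ ≤ u*((k:ℝ)+1) := mul_le_mul_of_nonneg_left hk1 hu0
    have hmx : (m:ℝ)*x = (k:ℝ)*x + (i:ℝ)*x := by rw [hmk]; ring
    have hxk : x*((s:ℝ)-(k:ℝ)) ≤ (1+u)*((k:ℝ)+1) := by
      have hml' : x*s' ≤ ((m:ℝ)+1)*(1+x) := hml
      simp only [hs'def] at hml'
      nlinarith [hml', hmx, hu_k, hmk]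
    have hApos : (0:ℝ) ≤ (s.choose k : ℝ) * x^k := by positivity
    have h5 : aT s x (k+1) * ((k:ℝ)+1) ≤ ((1+u) * aT s x k) * ((k:ℝ)+1) := by
      calc aT s x (k+1) * ((k:ℝ)+1) = aT s x k * (x*((s:ℝ)-(k:ℝ))) := aT_succ s x k hks
        _ = ((s.choose k : ℝ) * x^k) * (x*((s:ℝ)-(k:ℝ))) := by rw [aT]
        _ ≤ ((s.choose k : ℝ) * x^k) * ((1+u)*((k:ℝ)+1)) :=
            mul_le_mul_of_nonneg_left hxk hApos
        _ = ((1+u) * aT s x k) * ((k:ℝ)+1) := by rw [aT]; ring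
    have := le_of_mul_le_mul_right h5 (show (0:ℝ) < (k:ℝ)+1 by positivity)
    have hrw : m - i + 1 = k + 1 := by omega
    rw [hrw]
    exact this
  -- iterate
  have hchain : ∀ j, j ≤ J → aT s x m ≤ (1+u)^j * aT s x (m-j) := by
    intro j
    induction j with
    | zero => intro _; simpa using le_refl (aT s x m)
    | succ n ih =>
      intro hn1
      have hn := ih (Nat.le_of_succ_le hn1)
      have hs1 := hstep (n+1) (Nat.succ_le_succ (Nat.zero_le n)) hn1
      have heq : m - (n+1) + 1 = m - n := by omega
      rw [heq] at hs1
      calc aT s x m ≤ (1+u)^n * aT s x (m-n) := hn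
        _ ≤ (1+u)^n * ((1+u) * aT s x (m-(n+1))) :=
            mul_le_mul_of_nonneg_left hs1 (pow_nonneg (by linarith) n)
        _ = (1+u)^(n+1) * aT s x (m-(n+1)) := by ring
  -- window sum
  have himg : ∑ j ∈ Finset.range (J+1), aT s x (m-j) ≤ (x+1)^s := by
    rw [← aT_sum s x]
    have h1 : ∑ j ∈ Finset.range (J+1), aT s x (m-j)
        = ∑ t ∈ (Finset.range (J+1)).image (fun j => m - j), aT s x t := by
      rw [Finset.sum_image]
      intro j1 hj1 j2 hj2 h
      simp only [Finset.mem_coe, Finset.mem_range] at hj1 hj2 h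
      omega
    rw [h1]
    apply Finset.sum_le_sum_of_subset_of_nonneg
    · intro t ht
      simp only [Finset.mem_image, Finset.mem_range] at ht ⊢
      obtain ⟨j, _, rfl⟩ := ht
      omega
    · intro t _ _
      exact aT_nonneg s x (by linarith) t
  have h8 : (1+u)^J ≤ Real.exp (4*(1+x)) := by
    calc (1+u)^J ≤ (Real.exp u)^J := by
          apply pow_le_pow_left₀ (by linarith)
          linarith [Real.add_one_le_exp u]
      _ = Real.exp ((J:ℝ)*u) := (Real.exp_nat_mul u J).symm
      _ ≤ Real.exp (4*(1+x)) := by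
          apply Real.exp_le_exp.mpr
          rw [hu]
          rw [show (J:ℝ) * (4*(1+x)*(J:ℝ)/s') = 4*(1+x)*((J:ℝ)^2)/s' by ring]
          rw [div_le_iff₀ hs'pos]
          nlinarith [mul_le_mul_of_nonneg_left hJ2 (show (0:ℝ) ≤ 4*(1+x) by linarith)]
  have hcard : ((J:ℝ)+1) * aT s x m ≤ Real.exp (4*(1+x)) * (x+1)^s := by
    have hsum1 : ((J:ℝ)+1) * aT s x m = ∑ _j ∈ Finset.range (J+1), aT s x m := by
      rw [Finset.sum_const, Finset.card_range, nsmul_eq_mul]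
      push_cast; ring
    calc ((J:ℝ)+1) * aT s x m = ∑ _j ∈ Finset.range (J+1), aT s x m := hsum1
      _ ≤ ∑ j ∈ Finset.range (J+1), (1+u)^J * aT s x (m-j) := by
          apply Finset.sum_le_sum
          intro j hj
          have hjJ : j ≤ J := by
            have := Finset.mem_range.mp hj; omega
          calc aT s x m ≤ (1+u)^j * aT s x (m-j) := hchain j hjJ
            _ ≤ (1+u)^J * aT s x (m-j) := by
                apply mul_le_mul_of_nonneg_right _ (aT_nonneg s x (by linarith) _)
                exact pow_le_pow_right₀ (by linarith) hjJ
      _ = (1+u)^J * ∑ j ∈ Finset.range (J+1), aT s x (m-j) := by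
          rw [Finset.mul_sum]
      _ ≤ (1+u)^J * (x+1)^s :=
          mul_le_mul_of_nonneg_left himg (pow_nonneg (by linarith) J)
      _ ≤ Real.exp (4*(1+x)) * (x+1)^s :=
          mul_le_mul_of_nonneg_right h8 (pow_nonneg (by linarith) s)
  -- conclude
  have hak : aT s x k ≤ aT s x m := by
    by_cases hk : k ≤ s
    · exact hm_max k (Finset.mem_range.mpr (by omega))
    · have hz : s.choose k = 0 := Nat.choose_eq_zero_of_lt (by omega)
      have : aT s x k = 0 := by simp [aT, hz]
      rw [this]
      exact aT_nonneg s x (by linarith) m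
  have hsqJ : Real.sqrt s ≤ (J:ℝ)+1 := by
    have h10 : (s:ℝ) ≤ ((J:ℝ)+1)^2 := by
      have : (s:ℝ) ≤ s' := by simp only [hs'def]; linarith
      linarith
    calc Real.sqrt s ≤ Real.sqrt (((J:ℝ)+1)^2) := Real.sqrt_le_sqrt h10
      _ = (J:ℝ)+1 := Real.sqrt_sq (by positivity)
  calc Real.sqrt s * aT s x k ≤ ((J:ℝ)+1) * aT s x m :=
        mul_le_mul hsqJ hak (aT_nonneg s x (by linarith) k) (by positivity)
    _ ≤ Real.exp (4*(1+x)) * (x+1)^s := hcard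

set_option maxHeartbeats 1000000 in
private lemma sum_bound (x : ℝ) (hx : 1 ≤ x) (s : ℕ) :
    Real.sqrt s * ∑ k ∈ Finset.Icc 1 s,
        ((s.choose k : ℝ) * (s.choose (k-1) : ℝ) * (x^2)^k)
      ≤ (4*x + x*Real.exp (4*(1+x))) * ((x+1)^s * (x+1)^s) := by
  have hx0 : (0:ℝ) < x := by linarith
  have h1x : (0:ℝ) < x+1 := by linarith
  have hterm : ∀ k ∈ Finset.Icc 1 s, (s.choose k:ℝ)*(s.choose (k-1):ℝ)*(x^2)^k
      = x * aT s x (k-1) * aT s x k := by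
    intro k hk
    obtain ⟨j, rfl⟩ : ∃ j, k = j + 1 := ⟨k - 1, by
      have := (Finset.mem_Icc.mp hk).1; omega⟩
    simp only [aT, Nat.add_sub_cancel]
    ring
  have hsub : ∑ k ∈ Finset.Icc 1 s, aT s x (k-1) ≤ (x+1)^s := by
    have himg : Finset.Icc 1 s = Finset.image (fun j => j + 1) (Finset.range s) := by
      ext t
      simp only [Finset.mem_Icc, Finset.mem_image, Finset.mem_range]
      constructor
      · rintro ⟨h1, h2⟩
        exact ⟨t-1, by omega, by omega⟩
      · rintro ⟨j, hj, rfl⟩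
        omega
    rw [himg, Finset.sum_image (by intro a _ b _ h; simp only at h; omega)]
    simp only [Nat.add_sub_cancel]
    rw [← aT_sum s x]
    apply Finset.sum_le_sum_of_subset_of_nonneg
    · intro t ht
      simp only [Finset.mem_range] at ht ⊢
      omega
    · intro t _ _
      exact aT_nonneg s x (by linarith) t
  by_cases h15 : 15 ≤ s
  · have h1 : Real.sqrt s * ∑ k ∈ Finset.Icc 1 s,
        ((s.choose k : ℝ) * (s.choose (k-1) : ℝ) * (x^2)^k)
        = ∑ k ∈ Finset.Icc 1 s, Real.sqrt s * (x * aT s x (k-1) * aT s x k) := by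
      rw [Finset.mul_sum]
      exact Finset.sum_congr rfl fun k hk => by rw [hterm k hk]
    rw [h1]
    have h2 : ∀ k ∈ Finset.Icc 1 s,
        Real.sqrt s * (x * aT s x (k-1) * aT s x k)
          ≤ (x * Real.exp (4*(1+x)) * (x+1)^s) * aT s x (k-1) := by
      intro k _
      have hm := max_term x hx s h15 k
      calc Real.sqrt s * (x * aT s x (k-1) * aT s x k)
          = (x * aT s x (k-1)) * (Real.sqrt s * aT s x k) := by ring
        _ ≤ (x * aT s x (k-1)) * (Real.exp (4*(1+x)) * (x+1)^s) :=
            mul_le_mul_of_nonneg_left hm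
              (mul_nonneg hx0.le (aT_nonneg s x (by linarith) _))
        _ = (x * Real.exp (4*(1+x)) * (x+1)^s) * aT s x (k-1) := by ring
    have hP2 : (0:ℝ) ≤ (x+1)^s * (x+1)^s :=
      mul_nonneg (pow_nonneg h1x.le s) (pow_nonneg h1x.le s)
    calc ∑ k ∈ Finset.Icc 1 s, Real.sqrt s * (x * aT s x (k-1) * aT s x k)
        ≤ ∑ k ∈ Finset.Icc 1 s, (x * Real.exp (4*(1+x)) * (x+1)^s) * aT s x (k-1) :=
          Finset.sum_le_sum h2
      _ = (x * Real.exp (4*(1+x)) * (x+1)^s) * ∑ k ∈ Finset.Icc 1 s, aT s x (k-1) := by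
          rw [Finset.mul_sum]
      _ ≤ (x * Real.exp (4*(1+x)) * (x+1)^s) * (x+1)^s := by
          apply mul_le_mul_of_nonneg_left hsub
          exact mul_nonneg (mul_nonneg hx0.le (Real.exp_pos _).le) (pow_nonneg h1x.le s)
      _ ≤ (4*x + x*Real.exp (4*(1+x))) * ((x+1)^s * (x+1)^s) := by
          have h4x : (0:ℝ) ≤ x * ((x+1)^s * (x+1)^s) := mul_nonneg hx0.le hP2
          nlinarith [h4x]
  · have hs14 : s ≤ 14 := by omega
    have hsq4 : Real.sqrt s ≤ 4 := by
      have h16 : (s:ℝ) ≤ 16 := by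
        have : (s:ℝ) ≤ 14 := by exact_mod_cast hs14
        linarith
      calc Real.sqrt s ≤ Real.sqrt 16 := Real.sqrt_le_sqrt h16
        _ = 4 := by
          rw [show (16:ℝ) = 4^2 by norm_num, Real.sqrt_sq (by norm_num)]
    have hak_le : ∀ k, aT s x k ≤ (x+1)^s := by
      intro k
      by_cases hk : k ≤ s
      · rw [← aT_sum s x]
        exact Finset.single_le_sum (fun i _ => aT_nonneg s x (by linarith) i)
          (Finset.mem_range.mpr (by omega))
      · have hz : s.choose k = 0 := Nat.choose_eq_zero_of_lt (by omega)
        have hzz : aT s x k = 0 := by simp [aT, hz]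
        rw [hzz]
        positivity
    have hSig : ∑ k ∈ Finset.Icc 1 s, ((s.choose k : ℝ) * (s.choose (k-1) : ℝ) * (x^2)^k)
        ≤ (x*(x+1)^s) * (x+1)^s := by
      calc ∑ k ∈ Finset.Icc 1 s, ((s.choose k : ℝ) * (s.choose (k-1) : ℝ) * (x^2)^k)
          = ∑ k ∈ Finset.Icc 1 s, x * aT s x (k-1) * aT s x k :=
            Finset.sum_congr rfl hterm
        _ ≤ ∑ k ∈ Finset.Icc 1 s, (x*(x+1)^s) * aT s x (k-1) := by
            apply Finset.sum_le_sum
            intro k _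
            calc x * aT s x (k-1) * aT s x k ≤ x * aT s x (k-1) * (x+1)^s :=
                  mul_le_mul_of_nonneg_left (hak_le k)
                    (mul_nonneg hx0.le (aT_nonneg s x (by linarith) _))
              _ = (x*(x+1)^s) * aT s x (k-1) := by ring
        _ = (x*(x+1)^s) * ∑ k ∈ Finset.Icc 1 s, aT s x (k-1) := by rw [Finset.mul_sum]
        _ ≤ (x*(x+1)^s)*(x+1)^s :=
            mul_le_mul_of_nonneg_left hsub (mul_nonneg hx0.le (pow_nonneg h1x.le s))
    have hSig0 : (0:ℝ) ≤ ∑ k ∈ Finset.Icc 1 s,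
        ((s.choose k : ℝ) * (s.choose (k-1) : ℝ) * (x^2)^k) :=
      Finset.sum_nonneg fun k _ => by positivity
    have hP : (0:ℝ) ≤ (x+1)^s := pow_nonneg h1x.le s
    have hE : (0:ℝ) < Real.exp (4*(1+x)) := Real.exp_pos _
    calc Real.sqrt s * ∑ k ∈ Finset.Icc 1 s,
          ((s.choose k : ℝ) * (s.choose (k-1) : ℝ) * (x^2)^k)
        ≤ 4 * ((x*(x+1)^s)*(x+1)^s) := mul_le_mul hsq4 hSig hSig0 (by norm_num)
      _ ≤ (4*x + x*Real.exp (4*(1+x))) * ((x+1)^s * (x+1)^s) := by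
          nlinarith [mul_nonneg (mul_nonneg hx0.le hE.le) (mul_nonneg hP hP)]

set_option maxHeartbeats 1000000 in
/-- For `γ ≥ 1`, `σ > 0`, and a sequence `s_N → ∞` with `N = O(s_N^{3/2})`,
one has `Σ_{k=1}^{s_N} (N/s_N) C(s_N,k) C(s_N,k-1) γ^k σ^{2 s_N} = O(u₊^{s_N})`,
where `u₊ = σ²(1+√γ)²`. -/
theorem narayana_weighted_sum_bigO (γ σ : ℝ) (hγ : 1 ≤ γ) (hσ : 0 < σ)
    (s N : ℕ → ℕ) (hs : Tendsto s atTop atTop)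
    (hN : ∃ c > 0, ∀ n, (N n : ℝ) ≤ c * (s n : ℝ) ^ ((3 : ℝ) / 2)) :
    ∃ C > 0, ∀ n,
      ∑ k ∈ Finset.Icc 1 (s n),
          ((N n : ℝ) / (s n : ℝ)) * ((s n).choose k : ℝ) * ((s n).choose (k - 1) : ℝ) *
            γ ^ k * σ ^ (2 * s n)
        ≤ C * (σ ^ 2 * (1 + Real.sqrt γ) ^ 2) ^ (s n) := by
  obtain ⟨c, hc0, hcN⟩ := hN
  have hγ0 : (0:ℝ) ≤ γ := by linarith
  set x := Real.sqrt γ with hxdef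
  have hx1 : 1 ≤ x := by
    have h := Real.sqrt_le_sqrt hγ
    rwa [Real.sqrt_one] at h
  have hx2 : x^2 = γ := Real.sq_sqrt hγ0
  have hx0 : (0:ℝ) < x := by linarith
  set K : ℝ := 4*x + x*Real.exp (4*(1+x)) with hK
  have hK0 : 0 < K := by
    have := Real.exp_pos (4*(1+x))
    rw [hK]; nlinarith
  refine ⟨c*K + 1, by nlinarith, fun n => ?_⟩
  have key := sum_bound x hx1 (s n)
  have hfact : ∑ k ∈ Finset.Icc 1 (s n),
      ((N n : ℝ) / (s n : ℝ)) * ((s n).choose k : ℝ) * ((s n).choose (k - 1) : ℝ) *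
        γ ^ k * σ ^ (2 * s n)
      = ((N n:ℝ)/(s n:ℝ) * σ^(2*s n)) * ∑ k ∈ Finset.Icc 1 (s n),
          (((s n).choose k:ℝ) * ((s n).choose (k-1):ℝ) * (x^2)^k) := by
    rw [Finset.mul_sum]
    refine Finset.sum_congr rfl fun k _ => ?_
    rw [hx2]; ring
  rw [hfact]
  have hSig0 : (0:ℝ) ≤ ∑ k ∈ Finset.Icc 1 (s n),
      (((s n).choose k:ℝ) * ((s n).choose (k-1):ℝ) * (x^2)^k) :=
    Finset.sum_nonneg fun k _ => by positivity
  have hNs : (N n:ℝ)/(s n:ℝ) ≤ c * Real.sqrt (s n) := by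
    rcases Nat.eq_zero_or_pos (s n) with h0 | hpos
    · rw [h0]; simp
    · have hsp : (0:ℝ) < (s n:ℝ) := by exact_mod_cast hpos
      have h32 : ((s n:ℝ)) ^ ((3:ℝ)/2) = (s n:ℝ) * Real.sqrt (s n) := by
        rw [show (3:ℝ)/2 = 1 + 1/2 by norm_num, Real.rpow_add hsp, Real.rpow_one,
          ← Real.sqrt_eq_rpow]
      rw [div_le_iff₀ hsp]
      calc (N n:ℝ) ≤ c * (s n:ℝ)^((3:ℝ)/2) := hcN n
        _ = c * Real.sqrt (s n) * (s n:ℝ) := by rw [h32]; ring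
  have key' : ((N n:ℝ)/(s n:ℝ)) * (∑ k ∈ Finset.Icc 1 (s n),
      (((s n).choose k:ℝ) * ((s n).choose (k-1):ℝ) * (x^2)^k))
      ≤ c * (K * ((x+1)^(s n) * (x+1)^(s n))) := by
    calc ((N n:ℝ)/(s n:ℝ)) * (∑ k ∈ Finset.Icc 1 (s n),
        (((s n).choose k:ℝ) * ((s n).choose (k-1):ℝ) * (x^2)^k))
        ≤ (c * Real.sqrt (s n)) * (∑ k ∈ Finset.Icc 1 (s n),
            (((s n).choose k:ℝ) * ((s n).choose (k-1):ℝ) * (x^2)^k)) :=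
          mul_le_mul_of_nonneg_right hNs hSig0
      _ = c * (Real.sqrt (s n) * (∑ k ∈ Finset.Icc 1 (s n),
            (((s n).choose k:ℝ) * ((s n).choose (k-1):ℝ) * (x^2)^k))) := by ring
      _ ≤ c * (K * ((x+1)^(s n) * (x+1)^(s n))) := by
          apply mul_le_mul_of_nonneg_left _ hc0.le
          rw [hK]
          exact key
  have hσP : (0:ℝ) ≤ σ^(2*s n) := by positivity
  have hpowE : (σ ^ 2 * (1 + x) ^ 2) ^ (s n)
      = σ^(2*s n) * ((x+1)^(s n) * (x+1)^(s n)) := by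
    rw [mul_pow, ← pow_mul, show (1+x)^2 = (x+1)*(x+1) by ring, mul_pow]
  have hPnn : (0:ℝ) ≤ (σ ^ 2 * (1 + x) ^ 2) ^ (s n) := by positivity
  calc ((N n:ℝ)/(s n:ℝ) * σ^(2*s n)) * ∑ k ∈ Finset.Icc 1 (s n),
        (((s n).choose k:ℝ) * ((s n).choose (k-1):ℝ) * (x^2)^k)
      = σ^(2*s n) * (((N n:ℝ)/(s n:ℝ)) * ∑ k ∈ Finset.Icc 1 (s n),
          (((s n).choose k:ℝ) * ((s n).choose (k-1):ℝ) * (x^2)^k)) := by ring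
    _ ≤ σ^(2*s n) * (c * (K * ((x+1)^(s n) * (x+1)^(s n)))) :=
        mul_le_mul_of_nonneg_left key' hσP
    _ = c*K * (σ ^ 2 * (1 + x) ^ 2) ^ (s n) := by rw [hpowE]; ring
    _ ≤ (c*K+1) * (σ ^ 2 * (1 + x) ^ 2) ^ (s n) := by nlinarith [hPnn]
end

section
/- Fix γ ≥ 1 and let s → ∞, with k̂ = ⌊(√γ/(1+√γ)) s⌋ + 1. Then max_{1 ≤ k ≤ s} (C(s,k))² γ^k is asymptotically equivalent to (C(s,k̂))² γ^{k̂}, which is asymptotically (1+√γ)^{2s} · (1+√γ)²/(s√γ) · 1/(2π). -/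
open Filter

/-- `k̂ = ⌊(√γ/(1+√γ)) s⌋ + 1`. -/
noncomputable def khat (γ : ℝ) (s : ℕ) : ℕ :=
  ⌊(Real.sqrt γ / (1 + Real.sqrt γ)) * (s : ℝ)⌋₊ + 1

namespace MBWaux


noncomputable def W (γ : ℝ) (s k : ℕ) : ℝ := (s.choose k : ℝ)^2 * γ^k

lemma W_nonneg {γ : ℝ} (hγ : 0 ≤ γ) (s k : ℕ) : 0 ≤ W γ s k := by
  unfold W; positivity

lemma W_pos {γ : ℝ} (hγ : 0 < γ) {s k : ℕ} (h : k ≤ s) : 0 < W γ s k := by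
  unfold W
  have : 0 < s.choose k := Nat.choose_pos h
  positivity

lemma W_step (γ : ℝ) (s k : ℕ) :
    W γ s (k+1) * ((k:ℝ)+1)^2 = W γ s k * ((s-k : ℕ):ℝ)^2 * γ := by
  have hc : (s.choose (k+1) : ℝ) * ((k:ℝ)+1) = (s.choose k : ℝ) * ((s-k : ℕ):ℝ) := by
    exact_mod_cast congrArg (fun n : ℕ => (n : ℝ)) (Nat.choose_succ_right_eq s k)
  calc W γ s (k+1) * ((k:ℝ)+1)^2
      = ((s.choose (k+1) : ℝ) * ((k:ℝ)+1))^2 * γ^(k+1) := by unfold W; ring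
    _ = ((s.choose k : ℝ) * ((s-k : ℕ):ℝ))^2 * γ^(k+1) := by rw [hc]
    _ = W γ s k * ((s-k : ℕ):ℝ)^2 * γ := by unfold W; rw [pow_succ]; ring

lemma W_le_succ {γ : ℝ} (hγ : 0 ≤ γ) {s k : ℕ}
    (h : (k:ℝ)+1 ≤ ((s-k : ℕ):ℝ) * Real.sqrt γ) : W γ s k ≤ W γ s (k+1) := by
  have hsq : ((k:ℝ)+1)^2 ≤ ((s-k : ℕ):ℝ)^2 * γ := by
    have h2 : (((s-k : ℕ):ℝ) * Real.sqrt γ)^2 = ((s-k : ℕ):ℝ)^2 * γ := by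
      rw [mul_pow, Real.sq_sqrt hγ]
    nlinarith [(Nat.cast_nonneg k : (0:ℝ) ≤ k)]
  have hW := W_step γ s k
  have hWk := W_nonneg hγ s k
  have hpos : (0:ℝ) < ((k:ℝ)+1)^2 := by positivity
  have : W γ s k * ((k:ℝ)+1)^2 ≤ W γ s (k+1) * ((k:ℝ)+1)^2 := by
    rw [hW]; nlinarith
  exact le_of_mul_le_mul_right this hpos

lemma W_succ_le {γ : ℝ} (hγ : 0 ≤ γ) {s k : ℕ}
    (h : ((s-k : ℕ):ℝ) * Real.sqrt γ ≤ (k:ℝ)+1) : W γ s (k+1) ≤ W γ s k := by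
  have hsq : ((s-k : ℕ):ℝ)^2 * γ ≤ ((k:ℝ)+1)^2 := by
    have h2 : (((s-k : ℕ):ℝ) * Real.sqrt γ)^2 = ((s-k : ℕ):ℝ)^2 * γ := by
      rw [mul_pow, Real.sq_sqrt hγ]
    have hnn : (0:ℝ) ≤ ((s-k:ℕ):ℝ) * Real.sqrt γ := by positivity
    nlinarith
  have hW := W_step γ s k
  have hWk := W_nonneg hγ s k
  have hpos : (0:ℝ) < ((k:ℝ)+1)^2 := by positivity
  have : W γ s (k+1) * ((k:ℝ)+1)^2 ≤ W γ s k * ((k:ℝ)+1)^2 := by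
    rw [hW]; nlinarith
  exact le_of_mul_le_mul_right this hpos

lemma chain_mono (g : ℕ → ℝ) {m n : ℕ} (h : m ≤ n)
    (hs : ∀ j, m ≤ j → j < n → g j ≤ g (j+1)) : g m ≤ g n := by
  induction n, h using Nat.le_induction with
  | base => exact le_refl _
  | succ n hmn ih =>
      exact le_trans (ih fun j hj hj' => hs j hj (hj'.trans (Nat.lt_succ_self n)))
        (hs n hmn (Nat.lt_succ_self n))

lemma chain_anti (g : ℕ → ℝ) {m n : ℕ} (h : m ≤ n)
    (hs : ∀ j, m ≤ j → j < n → g (j+1) ≤ g j) : g n ≤ g m := by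
  induction n, h using Nat.le_induction with
  | base => exact le_refl _
  | succ n hmn ih =>
      exact le_trans (hs n hmn (Nat.lt_succ_self n))
        (ih fun j hj hj' => hs j hj (hj'.trans (Nat.lt_succ_self n)))


set_option maxHeartbeats 1000000 in
lemma part1 {γ : ℝ} (hγ : 1 ≤ γ) :
    Tendsto (fun s : ℕ =>
        sSup ((fun k : ℕ => ((s.choose k : ℝ)) ^ 2 * γ ^ k) '' Set.Icc 1 s) /
          (((s.choose (khat γ s) : ℝ)) ^ 2 * γ ^ (khat γ s)))
      atTop (nhds 1) := by
  have hγ0 : (0:ℝ) < γ := lt_of_lt_of_le one_pos hγ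
  set b := Real.sqrt γ with hbdef
  have hb : 1 ≤ b := by
    rw [hbdef, show (1:ℝ) = Real.sqrt 1 by simp]
    exact Real.sqrt_le_sqrt hγ
  have hb0 : 0 < b := lt_of_lt_of_le one_pos hb
  have hγb : γ = b^2 := (Real.sq_sqrt hγ0.le).symm
  have h1b : (0:ℝ) < 1 + b := by linarith
  clear_value b
  set a := b / (1 + b) with hadef
  have ha0 : 0 < a := div_pos hb0 h1b
  have ha1 : a < 1 := (div_lt_one h1b).mpr (by linarith)
  clear_value a
  have hasum : a * (1 + b) = b := by rw [hadef]; field_simp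
  have ha_eq : (1 - a) * b = a := by nlinarith [hasum]
  -- q: the explicit ratio
  set q : ℕ → ℝ := fun s => ((⌊a*(s:ℝ)⌋₊:ℝ)+1)^2 / (((s:ℝ) - (⌊a*(s:ℝ)⌋₊:ℝ))^2 * γ)
    with hqdef
  clear_value q
  -- limit of q
  have hcast : Tendsto (fun s : ℕ => (s:ℝ)) atTop atTop := tendsto_natCast_atTop_atTop
  have hfloor : Tendsto (fun s : ℕ => (⌊a*(s:ℝ)⌋₊:ℝ)/(s:ℝ)) atTop (nhds a) :=
    (tendsto_nat_floor_mul_div_atTop ha0.le).comp hcast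
  have h1s : Tendsto (fun s : ℕ => 1/(s:ℝ)) atTop (nhds 0) :=
    tendsto_one_div_atTop_nhds_zero_nat
  have hnum : Tendsto (fun s : ℕ => ((⌊a*(s:ℝ)⌋₊:ℝ)/(s:ℝ) + 1/(s:ℝ))^2)
      atTop (nhds (a^2)) := by
    have := (hfloor.add h1s).pow 2
    simpa using this
  have hden : Tendsto (fun s : ℕ => (1 - (⌊a*(s:ℝ)⌋₊:ℝ)/(s:ℝ))^2 * γ)
      atTop (nhds ((1-a)^2 * γ)) := ((tendsto_const_nhds.sub hfloor).pow 2).mul tendsto_const_nhds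
  have hdenne : (1-a)^2 * γ ≠ 0 := mul_ne_zero (pow_ne_zero 2 (by linarith)) hγ0.ne'
  have hq : Tendsto q atTop (nhds 1) := by
    have hlim : Tendsto (fun s : ℕ =>
        ((⌊a*(s:ℝ)⌋₊:ℝ)/(s:ℝ) + 1/(s:ℝ))^2 / ((1 - (⌊a*(s:ℝ)⌋₊:ℝ)/(s:ℝ))^2 * γ))
        atTop (nhds (a^2/((1-a)^2*γ))) := hnum.div hden hdenne
    have hval : a^2/((1-a)^2*γ) = 1 := by
      have h2 : (1-a)^2*γ = a^2 := by rw [hγb]; nlinarith [ha_eq]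
      rw [h2]; field_simp
    rw [hval] at hlim
    apply hlim.congr'
    filter_upwards [eventually_ge_atTop 1] with s hs
    have hs0 : (0:ℝ) < (s:ℝ) := by exact_mod_cast hs
    rw [hqdef]
    field_simp
  -- main eventual identity
  have hA : Tendsto (fun s : ℕ => a * (s:ℝ)) atTop atTop :=
    Tendsto.const_mul_atTop ha0 hcast
  have hU : Tendsto (fun s : ℕ => (1-a) * (s:ℝ)) atTop atTop :=
    Tendsto.const_mul_atTop (by linarith) hcast
  have hmax : Tendsto (fun s : ℕ => max (q s) 1) atTop (nhds 1) := by
    have := hq.max (tendsto_const_nhds (x := (1:ℝ)) (f := atTop))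
    simpa using this
  apply hmax.congr'
  filter_upwards [hA.eventually_ge_atTop 2, hU.eventually_ge_atTop 3] with s h2as h3as
  set F := ⌊a*(s:ℝ)⌋₊ with hFdef
  have hsnn : (0:ℝ) ≤ a * s := by positivity
  have hF_le : (F:ℝ) ≤ a*s := Nat.floor_le hsnn
  have hF_lt : a*(s:ℝ) < (F:ℝ)+1 := Nat.lt_floor_add_one _
  have hF2 : 2 ≤ F := Nat.le_floor (by exact_mod_cast h2as)
  have hF3s : (F:ℝ) + 3 ≤ (s:ℝ) := by nlinarith
  have hF3s' : F + 3 ≤ s := by exact_mod_cast hF3s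
  have hF1s : F + 1 ≤ s := by omega
  have hFs : F ≤ s := by omega
  have hkhat : khat γ s = F + 1 := by
    rw [hFdef, hadef, hbdef]
    simp only [khat]
  clear_value F
  have hWimg : (fun k : ℕ => ((s.choose k : ℝ)) ^ 2 * γ ^ k) = W γ s := rfl
  -- IsGreatest
  have hgreat : IsGreatest (W γ s '' Set.Icc 1 s) (max (W γ s F) (W γ s (F+1))) := by
    constructor
    · rcases max_choice (W γ s F) (W γ s (F+1)) with h | h <;> rw [h]
      · exact ⟨F, ⟨by omega, hFs⟩, rfl⟩
      · exact ⟨F+1, ⟨by omega, hF1s⟩, rfl⟩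
    · rintro x ⟨k, ⟨hk1, hks⟩, rfl⟩
      by_cases hkF : k ≤ F
      · refine le_trans (chain_mono (W γ s) hkF ?_) (le_max_left _ _)
        intro j hj hjF
        apply W_le_succ hγ0.le
        have hjs : j ≤ s := by omega
        rw [Nat.cast_sub hjs]
        have hj1 : (j:ℝ) + 1 ≤ F := by exact_mod_cast hjF
        have hjas : (j:ℝ) ≤ a*s := by nlinarith
        -- (j+1) ≤ (s-j)*b : j+1 ≤ a s ≤ (s-j) b
        nlinarith [hb0.le]
      · push_neg at hkF
        have hFk : F + 1 ≤ k := hkF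
        refine le_trans (chain_anti (W γ s) hFk ?_) (le_max_right _ _)
        intro j hj hjk
        apply W_succ_le hγ0.le
        have hjs : j ≤ s := by omega
        rw [Nat.cast_sub hjs]
        have hjF : (F:ℝ) + 1 ≤ (j:ℝ) := by exact_mod_cast hj
        have hjas : a*(s:ℝ) ≤ (j:ℝ) := by nlinarith
        nlinarith [hb0.le]
  have hsup := hgreat.csSup_eq
  have hWpos : 0 < W γ s (F+1) := W_pos hγ0 hF1s
  have hWFpos : 0 < W γ s F := W_pos hγ0 hFs
  -- compute q s = W F / W (F+1)
  have hmcast : ((s - F : ℕ):ℝ) = (s:ℝ) - (F:ℝ) := Nat.cast_sub hFs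
  have hdpos : (0:ℝ) < ((s:ℝ) - (F:ℝ))^2 * γ := by nlinarith
  have hqs : q s = W γ s F / W γ s (F+1) := by
    have hstep := W_step γ s F
    rw [hmcast] at hstep
    simp only [hqdef]
    rw [← hFdef, div_eq_div_iff hdpos.ne' hWpos.ne']
    linear_combination hstep
  -- conclude
  rw [hWimg, hsup, hkhat, hqs,
    show (↑(s.choose (F+1)):ℝ)^2*γ^(F+1) = W γ s (F+1) from rfl,
    show (1:ℝ) = W γ s (F+1)/W γ s (F+1) from (div_self hWpos.ne').symm,
    max_div_div_right hWpos.le]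

set_option maxHeartbeats 1000000 in
lemma part2 {γ : ℝ} (hγ : 1 ≤ γ) :
    Tendsto (fun s : ℕ =>
        (((s.choose (khat γ s) : ℝ)) ^ 2 * γ ^ (khat γ s)) /
          ((1 + Real.sqrt γ) ^ (2 * s) *
            ((1 + Real.sqrt γ) ^ 2 / ((s : ℝ) * Real.sqrt γ)) * (1 / (2 * Real.pi))))
      atTop (nhds 1) := by
  have hπ : (0:ℝ) < Real.pi := Real.pi_pos
  have hγ0 : (0:ℝ) < γ := lt_of_lt_of_le one_pos hγ
  have hσpos : ∀ n : ℕ, 1 ≤ n → 0 < Stirling.stirlingSeq n := by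
    intro n hn
    match n, hn with
    | (n+1), _ => exact Stirling.stirlingSeq'_pos n
  have hfac : ∀ n : ℕ, 1 ≤ n → (n.factorial : ℝ)
      = Stirling.stirlingSeq n * (Real.sqrt (2*(n:ℝ)) * ((n:ℝ)/Real.exp 1)^n) := by
    intro n hn
    have hn0 : (0:ℝ) < n := by exact_mod_cast hn
    have hd : (0:ℝ) < Real.sqrt (2*(n:ℝ)) * ((n:ℝ)/Real.exp 1)^n := by positivity
    rw [show Stirling.stirlingSeq n
        = (n.factorial : ℝ) / (Real.sqrt (2*(n:ℝ)) * ((n:ℝ)/Real.exp 1)^n) from rfl,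
      div_mul_cancel₀ _ hd.ne']
  set b := Real.sqrt γ with hbdef
  have hb : 1 ≤ b := by
    rw [hbdef, show (1:ℝ) = Real.sqrt 1 by simp]
    exact Real.sqrt_le_sqrt hγ
  have hb0 : 0 < b := lt_of_lt_of_le one_pos hb
  have hγb : γ = b^2 := by rw [hbdef]; exact (Real.sq_sqrt hγ0.le).symm
  have h1b : (0:ℝ) < 1 + b := by linarith
  clear_value b
  set a := b / (1 + b) with hadef
  clear_value a
  have ha0 : 0 < a := by rw [hadef]; positivity
  have ha1 : a < 1 := by rw [hadef]; exact (div_lt_one h1b).mpr (by linarith)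
  have hasum : a * (1 + b) = b := by rw [hadef]; field_simp
  have haneg : (1 - a) * (1 + b) = 1 := by nlinarith [hasum]
  have hkdef : ∀ s : ℕ, khat γ s = ⌊a * (s:ℝ)⌋₊ + 1 := by
    intro s; rw [hadef, hbdef]; simp only [khat]
  -- index functions to atTop
  have hcast : Tendsto (fun s : ℕ => (s:ℝ)) atTop atTop := tendsto_natCast_atTop_atTop
  have hA : Tendsto (fun s : ℕ => a * (s:ℝ)) atTop atTop :=
    Tendsto.const_mul_atTop ha0 hcast
  have hU : Tendsto (fun s : ℕ => (1-a) * (s:ℝ)) atTop atTop :=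
    Tendsto.const_mul_atTop (by linarith) hcast
  have hkatTop : Tendsto (fun s : ℕ => khat γ s) atTop atTop := by
    have h1 : Tendsto (fun s : ℕ => ⌊a*(s:ℝ)⌋₊) atTop atTop := tendsto_nat_floor_atTop.comp hA
    refine tendsto_atTop_mono (fun s => ?_) h1
    rw [hkdef s]; exact Nat.le_succ _
  have hmatTop : Tendsto (fun s : ℕ => s - khat γ s) atTop atTop := by
    rw [tendsto_atTop]
    intro c
    filter_upwards [hU.eventually_ge_atTop ((c:ℝ)+2)] with s hc
    have hF_le : (⌊a*(s:ℝ)⌋₊:ℝ) ≤ a*s := Nat.floor_le (by positivity)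
    have : (⌊a*(s:ℝ)⌋₊:ℝ) + 1 + c ≤ s := by nlinarith
    have h2 : ⌊a*(s:ℝ)⌋₊ + 1 + c ≤ s := by exact_mod_cast this
    rw [hkdef s]; omega
  -- the three factors
  set A : ℕ → ℝ := fun s =>
    (Stirling.stirlingSeq s /
      (Stirling.stirlingSeq (khat γ s) * Stirling.stirlingSeq (s - khat γ s)))^2
      * (2*Real.pi) with hAdef
  set Bf : ℕ → ℝ := fun s =>
    (s:ℝ)^2 * b / (2 * (khat γ s : ℝ) * ((s - khat γ s : ℕ) : ℝ) * (1+b)^2) with hBdef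
  set G : ℕ → ℝ := fun s =>
    (a*(s:ℝ)/(khat γ s : ℝ))^(khat γ s)
      * ((1-a)*(s:ℝ)/(((s - khat γ s : ℕ)):ℝ))^(s - khat γ s) with hGdef
  clear_value A Bf G
  -- limits
  have hsqrtπ : (0:ℝ) < Real.sqrt Real.pi := Real.sqrt_pos.mpr hπ
  have hσ := Stirling.tendsto_stirlingSeq_sqrt_pi
  have hAlim : Tendsto A atTop (nhds 2) := by
    have hne : Real.sqrt Real.pi * Real.sqrt Real.pi ≠ 0 := by positivity
    have h := ((hσ.div ((hσ.comp hkatTop).mul (hσ.comp hmatTop)) hne).pow 2).mul_const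
      (2*Real.pi)
    have hval : (Real.sqrt Real.pi / (Real.sqrt Real.pi * Real.sqrt Real.pi))^2
        * (2*Real.pi) = 2 := by
      rw [Real.mul_self_sqrt hπ.le, div_pow, Real.sq_sqrt hπ.le]
      field_simp
    rw [hval] at h
    exact h.congr (fun s => by simp [hAdef, Function.comp])
  have hfloor : Tendsto (fun s : ℕ => (⌊a*(s:ℝ)⌋₊:ℝ)/(s:ℝ)) atTop (nhds a) :=
    (tendsto_nat_floor_mul_div_atTop ha0.le).comp hcast
  have h1s : Tendsto (fun s : ℕ => 1/(s:ℝ)) atTop (nhds 0) :=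
    tendsto_one_div_atTop_nhds_zero_nat
  have hk_div : Tendsto (fun s : ℕ => (khat γ s:ℝ)/(s:ℝ)) atTop (nhds a) := by
    have h := hfloor.add h1s
    rw [add_zero] at h
    apply h.congr'
    filter_upwards [eventually_ge_atTop 1] with s hs
    have hs0 : (s:ℝ) ≠ 0 := by positivity
    rw [hkdef s]; push_cast; rw [← add_div]
  have hm_div : Tendsto (fun s : ℕ => (((s - khat γ s : ℕ)):ℝ)/(s:ℝ)) atTop
      (nhds (1-a)) := by
    have h := (tendsto_const_nhds (x := (1:ℝ)) (f := atTop (α := ℕ))).sub hk_div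
    apply h.congr'
    filter_upwards [hmatTop.eventually_ge_atTop 1, hkatTop.eventually_ge_atTop 1,
      eventually_ge_atTop 1] with s h1 h2 hs1
    have hks : khat γ s ≤ s := by omega
    have hs0 : (s:ℝ) ≠ 0 := by
      have : (1:ℝ) ≤ s := by exact_mod_cast hs1
      linarith
    rw [Nat.cast_sub hks, sub_div, div_self hs0]
  have hBlim : Tendsto Bf atTop (nhds (1/2)) := by
    have hdenlim : Tendsto (fun s : ℕ =>
        2 * ((khat γ s:ℝ)/(s:ℝ)) * ((((s - khat γ s : ℕ)):ℝ)/(s:ℝ)) * (1+b)^2) atTop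
        (nhds (2 * a * (1-a) * (1+b)^2)) :=
      ((tendsto_const_nhds.mul hk_div).mul hm_div).mul_const _
    have hdval : 2 * a * (1-a) * (1+b)^2 = 2*b := by
      linear_combination (2*(1-a)*(1+b))*hasum + (2*b)*haneg
    have hdne : 2 * a * (1-a) * (1+b)^2 ≠ 0 := by rw [hdval]; positivity
    have h := (tendsto_const_nhds (x := b) (f := atTop (α := ℕ))).div hdenlim hdne
    have hval : b / (2 * a * (1-a) * (1+b)^2) = 1/2 := by
      rw [hdval, div_eq_div_iff (by positivity) (by norm_num : (2:ℝ) ≠ 0)]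
      ring
    rw [hval] at h
    apply h.congr'
    filter_upwards [hkatTop.eventually_ge_atTop 1, hmatTop.eventually_ge_atTop 1,
      eventually_ge_atTop 1] with s h1 h2 h3
    have hk0 : (0:ℝ) < (khat γ s:ℝ) := by exact_mod_cast h1
    have hm0 : (0:ℝ) < ((s - khat γ s:ℕ):ℝ) := by exact_mod_cast h2
    have hs0 : (0:ℝ) < (s:ℝ) := by exact_mod_cast h3
    simp only [hBdef, Pi.div_apply]
    field_simp
  have hloglb : ∀ x : ℝ, 0 < x → 1 - x⁻¹ ≤ Real.log x := by
    intro x hx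
    have h := Real.log_le_sub_one_of_pos (inv_pos.mpr hx)
    rw [Real.log_inv] at h
    linarith
  have hGlim : Tendsto G atTop (nhds 1) := by
    have hLlim : Tendsto (fun s : ℕ => Real.exp (-(1/(a*(s:ℝ))) - 1/((1-a)*(s:ℝ))))
        atTop (nhds 1) := by
      have ha' : Tendsto (fun s : ℕ => 1/(a*(s:ℝ))) atTop (nhds 0) := by
        have h := tendsto_inv_atTop_zero.comp hA
        simp only [Function.comp_def] at h
        simpa only [one_div] using h
      have hu' : Tendsto (fun s : ℕ => 1/((1-a)*(s:ℝ))) atTop (nhds 0) := by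
        have h := tendsto_inv_atTop_zero.comp hU
        simp only [Function.comp_def] at h
        simpa only [one_div] using h
      have h1 : Tendsto (fun s : ℕ => -(1/(a*(s:ℝ))) - 1/((1-a)*(s:ℝ))) atTop (nhds 0) := by
        simpa using ha'.neg.sub hu'
      have h2 := (Real.continuous_exp.tendsto 0).comp h1
      simpa [Function.comp_def] using h2
    have hbounds : ∀ᶠ s : ℕ in atTop,
        Real.exp (-(1/(a*(s:ℝ))) - 1/((1-a)*(s:ℝ))) ≤ G s ∧ G s ≤ 1 := by
      filter_upwards [hA.eventually_ge_atTop 2, hU.eventually_ge_atTop 3] with s h2 h3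
      set K := khat γ s with hK
      set M := s - khat γ s with hM
      have hss : a*(s:ℝ) + (1-a)*(s:ℝ) = (s:ℝ) := by ring
      have hs0 : (0:ℝ) < s := by linarith
      have hF_le : (⌊a*(s:ℝ)⌋₊:ℝ) ≤ a*s := Nat.floor_le (by positivity)
      have hF_lt : a*(s:ℝ) < (⌊a*(s:ℝ)⌋₊:ℝ) + 1 := Nat.lt_floor_add_one _
      have hKr : (K:ℝ) = (⌊a*(s:ℝ)⌋₊:ℝ) + 1 := by rw [hK, hkdef s]; push_cast; ring
      have hKlow : a*(s:ℝ) < (K:ℝ) := by rw [hKr]; linarith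
      have hKhigh : (K:ℝ) ≤ a*(s:ℝ) + 1 := by rw [hKr]; linarith
      have hKs : K ≤ s := by
        have : (K:ℝ) ≤ (s:ℝ) := by linarith
        exact_mod_cast this
      have hMr : (M:ℝ) = (s:ℝ) - (K:ℝ) := by rw [hM, hK, Nat.cast_sub hKs]
      have hMbig : 2 ≤ (M:ℝ) := by rw [hMr]; linarith
      have hK0 : (0:ℝ) < K := by linarith
      have hM0 : (0:ℝ) < M := by linarith
      have ht0 : (0:ℝ) < a*(s:ℝ) := by linarith
      have hu0 : (0:ℝ) < (1-a)*(s:ℝ) := by linarith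
      have hx1 : (0:ℝ) < a*(s:ℝ)/(K:ℝ) := by positivity
      have hx2 : (0:ℝ) < (1-a)*(s:ℝ)/(M:ℝ) := by positivity
      have hGval : G s = (a*(s:ℝ)/(K:ℝ))^K * ((1-a)*(s:ℝ)/(M:ℝ))^M := by
        simp only [hGdef, ← hM, ← hK]; rfl
      have hGpos : 0 < G s := by rw [hGval]; positivity
      have hlogG : Real.log (G s) = (K:ℝ) * Real.log (a*(s:ℝ)/(K:ℝ))
          + (M:ℝ) * Real.log ((1-a)*(s:ℝ)/(M:ℝ)) := by
        rw [hGval, Real.log_mul (by positivity) (by positivity), Real.log_pow,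
          Real.log_pow]
      set δ := (K:ℝ) - a*(s:ℝ) with hδ
      have hδ0 : 0 < δ := by rw [hδ]; linarith
      have hδ1 : δ ≤ 1 := by rw [hδ]; linarith
      have hδsq : (0:ℝ) ≤ 1 - δ^2 := by
        have h := mul_le_mul hδ1 hδ1 hδ0.le zero_le_one
        rw [pow_two]
        linarith
      have hKd : (K:ℝ) = a*(s:ℝ) + δ := by rw [hδ]; ring
      have hMd : (M:ℝ) = (1-a)*(s:ℝ) - δ := by rw [hMr, hδ]; ring
      have hup1 : (K:ℝ) * Real.log (a*(s:ℝ)/(K:ℝ)) ≤ a*(s:ℝ) - K := by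
        have h := mul_le_mul_of_nonneg_left (Real.log_le_sub_one_of_pos hx1) hK0.le
        calc (K:ℝ) * Real.log (a*(s:ℝ)/(K:ℝ)) ≤ (K:ℝ) * (a*(s:ℝ)/(K:ℝ) - 1) := h
          _ = a*(s:ℝ) - K := by field_simp
      have hup2 : (M:ℝ) * Real.log ((1-a)*(s:ℝ)/(M:ℝ)) ≤ (1-a)*(s:ℝ) - M := by
        have h := mul_le_mul_of_nonneg_left (Real.log_le_sub_one_of_pos hx2) hM0.le
        calc (M:ℝ) * Real.log ((1-a)*(s:ℝ)/(M:ℝ)) ≤ (M:ℝ) * ((1-a)*(s:ℝ)/(M:ℝ) - 1) := h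
          _ = (1-a)*(s:ℝ) - M := by field_simp
      have hup : Real.log (G s) ≤ 0 := by
        rw [hlogG]
        have : a*(s:ℝ) - K + ((1-a)*(s:ℝ) - M) = 0 := by rw [hMr]; ring
        linarith
      have hlo1 : -δ - 1/(a*(s:ℝ)) ≤ (K:ℝ) * Real.log (a*(s:ℝ)/(K:ℝ)) := by
        have h2' := mul_le_mul_of_nonneg_left (hloglb _ hx1) hK0.le
        have he : (K:ℝ) * (1 - (a*(s:ℝ)/(K:ℝ))⁻¹) = (K:ℝ) - (K:ℝ)^2/(a*(s:ℝ)) := by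
          rw [inv_div]; field_simp
        rw [he] at h2'
        have hkey : (K:ℝ) - (K:ℝ)^2/(a*(s:ℝ)) - (-δ - 1/(a*(s:ℝ)))
            = (1 - δ^2)/(a*(s:ℝ)) := by
          rw [hKd]; field_simp; ring
        have hnn : (0:ℝ) ≤ (1 - δ^2)/(a*(s:ℝ)) := div_nonneg hδsq ht0.le
        linarith
      have hlo2 : δ - 1/((1-a)*(s:ℝ)) ≤ (M:ℝ) * Real.log ((1-a)*(s:ℝ)/(M:ℝ)) := by
        have h2' := mul_le_mul_of_nonneg_left (hloglb _ hx2) hM0.le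
        have he : (M:ℝ) * (1 - ((1-a)*(s:ℝ)/(M:ℝ))⁻¹) = (M:ℝ) - (M:ℝ)^2/((1-a)*(s:ℝ)) := by
          rw [inv_div]; field_simp
        rw [he] at h2'
        have hkey : (M:ℝ) - (M:ℝ)^2/((1-a)*(s:ℝ)) - (δ - 1/((1-a)*(s:ℝ)))
            = (1 - δ^2)/((1-a)*(s:ℝ)) := by
          rw [hMd]; field_simp [show (1:ℝ)-a ≠ 0 by linarith]; ring
        have hnn : (0:ℝ) ≤ (1 - δ^2)/((1-a)*(s:ℝ)) := div_nonneg hδsq hu0.le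
        linarith
      have hlo : -(1/(a*(s:ℝ))) - 1/((1-a)*(s:ℝ)) ≤ Real.log (G s) := by
        rw [hlogG]; linarith
      constructor
      · calc Real.exp (-(1/(a*(s:ℝ))) - 1/((1-a)*(s:ℝ)))
            ≤ Real.exp (Real.log (G s)) := Real.exp_le_exp.mpr hlo
          _ = G s := Real.exp_log hGpos
      · calc G s = Real.exp (Real.log (G s)) := (Real.exp_log hGpos).symm
          _ ≤ Real.exp 0 := Real.exp_le_exp.mpr hup
          _ = 1 := Real.exp_zero
    exact tendsto_of_tendsto_of_tendsto_of_le_of_le' hLlim tendsto_const_nhds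
      (hbounds.mono fun s h => h.1) (hbounds.mono fun s h => h.2)
  have hident : ∀ᶠ s in atTop, A s * Bf s * (G s)^2 =
      (((s.choose (khat γ s) : ℝ)) ^ 2 * γ ^ (khat γ s)) /
          ((1 + b) ^ (2 * s) * ((1 + b) ^ 2 / ((s : ℝ) * b)) * (1 / (2 * Real.pi))) := by
    filter_upwards [hA.eventually_ge_atTop 2, hU.eventually_ge_atTop 3] with s h2 h3
    set K := khat γ s with hK
    set M := s - khat γ s with hM
    have hss : a*(s:ℝ) + (1-a)*(s:ℝ) = (s:ℝ) := by ring
    have hs0r : (0:ℝ) < s := by linarith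
    have hs1 : 1 ≤ s := by
      have : (1:ℝ) ≤ s := by linarith
      exact_mod_cast this
    have hF_le : (⌊a*(s:ℝ)⌋₊:ℝ) ≤ a*s := Nat.floor_le (by positivity)
    have hF_lt : a*(s:ℝ) < (⌊a*(s:ℝ)⌋₊:ℝ) + 1 := Nat.lt_floor_add_one _
    have hKr : (K:ℝ) = (⌊a*(s:ℝ)⌋₊:ℝ) + 1 := by rw [hK, hkdef s]; push_cast; ring
    have hKhigh : (K:ℝ) ≤ a*(s:ℝ) + 1 := by rw [hKr]; linarith
    have hKlow : a*(s:ℝ) < (K:ℝ) := by rw [hKr]; linarith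
    have hKs : K ≤ s := by
      have : (K:ℝ) ≤ (s:ℝ) := by linarith
      exact_mod_cast this
    have hMr : (M:ℝ) = (s:ℝ) - (K:ℝ) := by rw [hM, hK, Nat.cast_sub hKs]
    have hM2r : 2 ≤ (M:ℝ) := by rw [hMr]; linarith
    have hK0 : (0:ℝ) < K := by linarith
    have hM0 : (0:ℝ) < M := by linarith
    have hK1 : 1 ≤ K := by
      have : (1:ℝ) ≤ K := by linarith
      exact_mod_cast this
    have hM1 : 1 ≤ M := by
      have : (1:ℝ) ≤ M := by linarith
      exact_mod_cast this
    have hM' : M = s - K := by rw [hM, hK]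
    have hKM : K + M = s := by omega
    -- nonzeroness
    have hσKne : Stirling.stirlingSeq K ≠ 0 := (hσpos K hK1).ne'
    have hσMne : Stirling.stirlingSeq M ≠ 0 := (hσpos M hM1).ne'
    have hsqs : (0:ℝ) < Real.sqrt (2*(s:ℝ)) := Real.sqrt_pos.mpr (by linarith)
    have hsqK : (0:ℝ) < Real.sqrt (2*(K:ℝ)) := Real.sqrt_pos.mpr (by linarith)
    have hsqM : (0:ℝ) < Real.sqrt (2*(M:ℝ)) := Real.sqrt_pos.mpr (by linarith)
    have he0 : Real.exp 1 ≠ 0 := (Real.exp_pos 1).ne'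
    have hKK : ((K:ℝ))^K ≠ 0 := pow_ne_zero _ hK0.ne'
    have hMM : ((M:ℝ))^M ≠ 0 := pow_ne_zero _ hM0.ne'
    have hsss : ((s:ℝ))^s ≠ 0 := pow_ne_zero _ hs0r.ne'
    -- choose in terms of Stirling sequence
    have hchoose : (s.choose K : ℝ)
        = (s.factorial : ℝ)/((K.factorial:ℝ) * (M.factorial:ℝ)) := by
      have h := Nat.cast_choose ℝ hKs
      rw [← hM'] at h
      exact h
    have hC : (s.choose K : ℝ)
        = (Stirling.stirlingSeq s/(Stirling.stirlingSeq K * Stirling.stirlingSeq M))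
          * (Real.sqrt (2*(s:ℝ))/(Real.sqrt (2*(K:ℝ)) * Real.sqrt (2*(M:ℝ))))
          * ((s:ℝ)^s/((K:ℝ)^K * (M:ℝ)^M)) := by
      rw [hchoose, hfac s hs1, hfac K hK1, hfac M hM1, div_pow, div_pow, div_pow,
        show (Real.exp 1)^s = (Real.exp 1)^K * (Real.exp 1)^M from by rw [← pow_add, hKM]]
      field_simp
    have hC2 : ((s.choose K : ℝ))^2
        = (Stirling.stirlingSeq s/(Stirling.stirlingSeq K * Stirling.stirlingSeq M))^2
          * ((s:ℝ)/(2*(K:ℝ)*(M:ℝ))) * ((s:ℝ)^s/((K:ℝ)^K * (M:ℝ)^M))^2 := by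
      have hNR : (Real.sqrt (2*(s:ℝ))/(Real.sqrt (2*(K:ℝ)) * Real.sqrt (2*(M:ℝ))))^2
          = (s:ℝ)/(2*(K:ℝ)*(M:ℝ)) := by
        rw [div_pow, mul_pow, Real.sq_sqrt (by linarith : (0:ℝ) ≤ 2*(s:ℝ)),
          Real.sq_sqrt (by linarith : (0:ℝ) ≤ 2*(K:ℝ)),
          Real.sq_sqrt (by linarith : (0:ℝ) ≤ 2*(M:ℝ))]
        rw [div_eq_div_iff (by positivity) (by positivity)]
        ring
      rw [hC, mul_pow, mul_pow, hNR]
    -- G in closed form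
    have hGval : G s = (a*(s:ℝ)/(K:ℝ))^K * ((1-a)*(s:ℝ)/(M:ℝ))^M := by
      simp only [hGdef, ← hM, ← hK]; rfl
    have e1 : (a*(s:ℝ)/(K:ℝ)) * (1+b) = b*(s:ℝ)/(K:ℝ) := by
      rw [div_mul_eq_mul_div, show a*(s:ℝ)*(1+b) = b*s by linear_combination (s:ℝ)*hasum]
    have e2 : ((1-a)*(s:ℝ)/(M:ℝ)) * (1+b) = (s:ℝ)/(M:ℝ) := by
      rw [div_mul_eq_mul_div, show (1-a)*(s:ℝ)*(1+b) = s by linear_combination (s:ℝ)*haneg]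
    have hGP : G s * ((1+b)^K * (1+b)^M)
        = ((s:ℝ)^s/((K:ℝ)^K * (M:ℝ)^M)) * b^K := by
      calc G s * ((1+b)^K * (1+b)^M)
          = ((a*(s:ℝ)/(K:ℝ)) * (1+b))^K * (((1-a)*(s:ℝ)/(M:ℝ)) * (1+b))^M := by
            rw [hGval, mul_pow, mul_pow]; ring
        _ = (b*(s:ℝ)/(K:ℝ))^K * ((s:ℝ)/(M:ℝ))^M := by rw [e1, e2]
        _ = ((s:ℝ)^s/((K:ℝ)^K * (M:ℝ)^M)) * b^K := by
            rw [show (s:ℝ)^s = (s:ℝ)^K * (s:ℝ)^M from by rw [← pow_add, hKM],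
              div_pow, div_pow, mul_pow]
            field_simp
    have hpowsum : ((1:ℝ)+b)^K * (1+b)^M = (1+b)^s := by rw [← pow_add, hKM]
    have h2s : ((1:ℝ)+b)^(2*s) = ((1+b)^s)^2 := by
      rw [Nat.mul_comm, pow_mul]
    have h1bs : ((1:ℝ)+b)^s ≠ 0 := pow_ne_zero _ h1b.ne'
    have hG2 : (G s)^2 * ((1+b)^s)^2
        = ((s:ℝ)^s/((K:ℝ)^K * (M:ℝ)^M))^2 * (b^K)^2 := by
      calc (G s)^2 * ((1+b)^s)^2
          = (G s * ((1+b)^K * (1+b)^M))^2 := by rw [hpowsum, mul_pow]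
        _ = (((s:ℝ)^s/((K:ℝ)^K * (M:ℝ)^M)) * b^K)^2 := by rw [hGP]
        _ = ((s:ℝ)^s/((K:ℝ)^K * (M:ℝ)^M))^2 * (b^K)^2 := by rw [mul_pow]
    have hGsq : (G s)^2
        = ((s:ℝ)^s/((K:ℝ)^K * (M:ℝ)^M))^2 * (b^K)^2 / ((1+b)^s)^2 := by
      rw [← hG2]
      field_simp
    have hγK : γ^K = (b^K)^2 := by
      rw [hγb, ← pow_mul, ← pow_mul, Nat.mul_comm]
    simp only [hAdef, hBdef, ← hM, ← hK, ← hM']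
    rw [hC2, hγK, hGsq, h2s]
    field_simp
  have hprod : Tendsto (fun s => A s * Bf s * (G s)^2) atTop (nhds (2 * (1/2) * 1^2)) :=
    (hAlim.mul hBlim).mul (hGlim.pow 2)
  norm_num at hprod
  exact hprod.congr' hident
end MBWaux

/-- For fixed `γ ≥ 1`, `max_{1 ≤ k ≤ s} (C(s,k))² γ^k` is asymptotically
equivalent to `(C(s,k̂))² γ^{k̂}`, which is itself asymptotically
`(1+√γ)^{2s} (1+√γ)²/(s√γ) · 1/(2π)`. -/
theorem max_binom_sq_weighted_asymptotics (γ : ℝ) (hγ : 1 ≤ γ) :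
    Tendsto (fun s : ℕ =>
        sSup ((fun k : ℕ => ((s.choose k : ℝ)) ^ 2 * γ ^ k) '' Set.Icc 1 s) /
          (((s.choose (khat γ s) : ℝ)) ^ 2 * γ ^ (khat γ s)))
      atTop (nhds 1) ∧
    Tendsto (fun s : ℕ =>
        (((s.choose (khat γ s) : ℝ)) ^ 2 * γ ^ (khat γ s)) /
          ((1 + Real.sqrt γ) ^ (2 * s) *
            ((1 + Real.sqrt γ) ^ 2 / ((s : ℝ) * Real.sqrt γ)) * (1 / (2 * Real.pi))))
      atTop (nhds 1) :=
  ⟨MBWaux.part1 hγ, MBWaux.part2 hγ⟩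
end
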